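/- arXiv:1504.04261 — 11 statements merged into one kernel-verified Lean document; each statement's English description precedes it below -/
import Mathlib

section
/- In any group G, if w = w1 * a⁻¹ * w2 * b⁻¹ * w3 * a * w4 * b * w5 and w1*w4*w3*w2*w5 = 1, then w is a commutator; explicitly, w = (w1*w4) * [w3*a*w4, b*w2⁻¹*w3⁻¹] * (w1*w4)⁻¹. -/
theorem stmt_1 {G : Type*} [Group G] (w w1 w2 w3 w4 w5 a b : G)
    (h : w = w1 * a⁻¹ * w2 * b⁻¹ * w3 * a * w4 * b * w5)
    (h1 : w1 * w4 * w3 * w2 * w5 = 1) :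
    (∃ u v : G, w = u⁻¹ * v⁻¹ * u * v) ∧
      w = (w1*w4) * ((w3*a*w4)⁻¹ * (b*w2⁻¹*w3⁻¹)⁻¹ * (w3*a*w4) * (b*w2⁻¹*w3⁻¹)) * (w1*w4)⁻¹ := by
  have hw5 : w5 = (w1 * w4 * w3 * w2)⁻¹ := by
    exact eq_inv_of_mul_eq_one_right (by simpa [mul_assoc] using h1)
  subst h hw5
  constructor
  · exact ⟨(w1*w4) * (w3*a*w4) * (w1*w4)⁻¹, (w1*w4) * (b*w2⁻¹*w3⁻¹) * (w1*w4)⁻¹, by group⟩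
  · group
end

section
/- In any group G, the commutator length of [x,y]³ is at most 2, i.e. [x,y]³ can be written as a product of two commutators; for example [x,y]³ = [x⁻¹yx, x⁻²yxy⁻¹]*[yxy⁻¹, y²]. -/
/-- The commutator `[a,b] = a⁻¹b⁻¹ab`. -/
def commF {G : Type*} [Group G] (a b : G) : G := a⁻¹ * b⁻¹ * a * b

/-- `g` is a product of `n` commutators. -/
def IsProdOfCommutators {G : Type*} [Group G] (g : G) (n : ℕ) : Prop :=
  ∃ a b : Fin n → G, g = (List.ofFn fun i => commF (a i) (b i)).prod

/-- The commutator length: the least number of commutators whose product is `g`. -/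
noncomputable def cl {G : Type*} [Group G] (g : G) : ℕ :=
  sInf {n | IsProdOfCommutators g n}

theorem stmt_7 {G : Type*} [Group G] (x y : G) :
    cl (commF x y ^ 3) ≤ 2 ∧
      commF x y ^ 3 = commF (x⁻¹ * y * x) (x⁻¹ ^ 2 * y * x * y⁻¹) * commF (y * x * y⁻¹) (y ^ 2) := by
  have h : commF x y ^ 3 = commF (x⁻¹ * y * x) (x⁻¹ ^ 2 * y * x * y⁻¹) * commF (y * x * y⁻¹) (y ^ 2) := by
    simp only [commF, pow_succ, pow_zero, one_mul]
    group
  refine ⟨?_, h⟩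
  apply Nat.sInf_le
  exact ⟨![x⁻¹ * y * x, y * x * y⁻¹], ![x⁻¹ ^ 2 * y * x * y⁻¹, y ^ 2], by
    simpa using h⟩
end

section
/- Let X be a finite set, Y ⊆ X, and σ a permutation of X such that every σ-orbit in X intersects Y. Then the map A ↦ A ∩ Y is a bijection between the set of σ-orbits in X and the set of σ_Y-orbits in Y; in particular σ and σ_Y have the same number of orbits. -/
/-- The set of orbits of a permutation. -/
def orbits {X : Type*} (σ : Equiv.Perm X) : Set (Set X) :=
  {A | ∃ x : X, A = {z | ∃ n : ℤ, (σ ^ n) x = z}}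

lemma zpow_to_npow {G : Type*} [Group G] [Finite G] (g : G) (n : ℤ) :
    ∃ k : ℕ, g ^ n = g ^ (k : ℤ) := by
  refine ⟨(n % (orderOf g : ℤ)).toNat, ?_⟩
  have hpos : 0 < orderOf g := orderOf_pos g
  have h0 : 0 ≤ n % (orderOf g : ℤ) := Int.emod_nonneg n (by exact_mod_cast hpos.ne')
  rw [Int.toNat_of_nonneg h0, zpow_mod_orderOf]

lemma orbit_eq_of_mem {X : Type*} (σ : Equiv.Perm X) {x y : X}
    (h : ∃ n : ℤ, (σ ^ n) x = y) :
    {z | ∃ n : ℤ, (σ ^ n) x = z} = {z | ∃ n : ℤ, (σ ^ n) y = z} := by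
  obtain ⟨n, hn⟩ := h
  ext z
  constructor
  · rintro ⟨k, hk⟩
    refine ⟨k - n, ?_⟩
    rw [← hn, ← Equiv.Perm.mul_apply, ← zpow_add, sub_add_cancel, hk]
  · rintro ⟨k, hk⟩
    refine ⟨k + n, ?_⟩
    rw [zpow_add, Equiv.Perm.mul_apply, hn, hk]

section key
variable {X : Type*} (Y : Set X) (σ : Equiv.Perm X) (σY : Equiv.Perm Y)
variable (hσY : ∀ y : Y, ∃ m : ℕ, 1 ≤ m ∧ (∀ k : ℕ, 1 ≤ k → k < m → (σ ^ k) (y : X) ∉ Y) ∧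
      ((σY y : X) = (σ ^ m) (y : X)))

include hσY

lemma fwd_lemma : ∀ k : ℕ, ∀ y : Y, ∃ n : ℕ, (((σY ^ k) y : Y) : X) = (σ ^ n) (y : X) := by
  intro k
  induction k with
  | zero => intro y; exact ⟨0, by simp⟩
  | succ k IH =>
    intro y
    obtain ⟨n, hn⟩ := IH y
    obtain ⟨m, -, -, hret⟩ := hσY ((σY ^ k) y)
    refine ⟨m + n, ?_⟩
    have h1 : (σY ^ (k + 1)) y = σY ((σY ^ k) y) := by
      rw [pow_succ', Equiv.Perm.mul_apply]
    rw [h1, hret, hn, ← Equiv.Perm.mul_apply, ← pow_add]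

lemma back_lemma : ∀ n : ℕ, ∀ y : Y, (σ ^ n) (y : X) ∈ Y →
    ∃ k : ℕ, (((σY ^ k) y : Y) : X) = (σ ^ n) (y : X) := by
  intro n
  induction n using Nat.strong_induction_on with
  | _ n IH =>
    intro y hy
    rcases Nat.eq_zero_or_pos n with h0 | hpos
    · subst h0; exact ⟨0, by simp⟩
    · obtain ⟨m, hm1, hmid, hret⟩ := hσY y
      have hmn : m ≤ n := by
        by_contra h
        push_neg at h
        exact hmid n hpos h hy
      have hsplit : (σ ^ n) (y : X) = (σ ^ (n - m)) ((σY y : Y) : X) := by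
        rw [hret, ← Equiv.Perm.mul_apply, ← pow_add]
        congr 2
        omega
      have hy' : (σ ^ (n - m)) ((σY y : Y) : X) ∈ Y := hsplit ▸ hy
      obtain ⟨k, hk⟩ := IH (n - m) (by omega) (σY y) hy'
      refine ⟨k + 1, ?_⟩
      have h1 : (σY ^ (k + 1)) y = (σY ^ k) (σY y) := by
        rw [pow_succ, Equiv.Perm.mul_apply]
      rw [h1, hk, hsplit]

lemma key_lemma [Fintype X] (y : Y) :
    {z : Y | ∃ n : ℤ, (σY ^ n) y = z} =
      Subtype.val ⁻¹' {z : X | ∃ n : ℤ, (σ ^ n) (y : X) = z} := by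
  ext z
  simp only [Set.mem_setOf_eq, Set.mem_preimage]
  constructor
  · rintro ⟨n, hn⟩
    obtain ⟨k, hk⟩ := zpow_to_npow σY n
    obtain ⟨j, hj⟩ := fwd_lemma Y σ σY hσY k y
    refine ⟨(j : ℤ), ?_⟩
    rw [zpow_natCast, ← hj]
    rw [hk, zpow_natCast] at hn
    rw [hn]
  · rintro ⟨n, hn⟩
    obtain ⟨k, hk⟩ := zpow_to_npow σ n
    rw [hk, zpow_natCast] at hn
    have hzY : (σ ^ k) (y : X) ∈ Y := hn ▸ z.2
    obtain ⟨j, hj⟩ := back_lemma Y σ σY hσY k y hzY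
    refine ⟨(j : ℤ), ?_⟩
    rw [zpow_natCast]
    exact Subtype.ext (hj.trans hn)

end key

theorem stmt_10 {X : Type*} [Fintype X] (Y : Set X) (σ : Equiv.Perm X) (σY : Equiv.Perm Y)
    (hσY : ∀ y : Y, ∃ m : ℕ, 1 ≤ m ∧ (∀ k : ℕ, 1 ≤ k → k < m → (σ ^ k) (y : X) ∉ Y) ∧
      ((σY y : X) = (σ ^ m) (y : X)))
    (hmeet : ∀ A ∈ orbits σ, (A ∩ Y).Nonempty) :
    Set.BijOn (fun A : Set X => ((Subtype.val ⁻¹' A : Set Y)))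
        (orbits σ) (orbits σY) ∧
      Nat.card (orbits σ) = Nat.card (orbits σY) := by
  -- every orbit equals the orbit of a point of Y
  have horb : ∀ A ∈ orbits σ, ∃ y : Y, A = {z | ∃ n : ℤ, (σ ^ n) ((y : Y) : X) = z} := by
    rintro A ⟨x, rfl⟩
    obtain ⟨y, hyA, hyY⟩ := hmeet _ ⟨x, rfl⟩
    exact ⟨⟨y, hyY⟩, orbit_eq_of_mem σ hyA⟩
  have hbij : Set.BijOn (fun A : Set X => ((Subtype.val ⁻¹' A : Set Y)))
      (orbits σ) (orbits σY) := by
    refine ⟨?_, ?_, ?_⟩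
    · intro A hA
      obtain ⟨y, rfl⟩ := horb A hA
      exact ⟨y, (key_lemma Y σ σY hσY y).symm⟩
    · intro A hA A' hA' hEq
      obtain ⟨y, rfl⟩ := horb A hA
      obtain ⟨y', rfl⟩ := horb A' hA'
      have hy : (y : X) ∈ {z | ∃ n : ℤ, (σ ^ n) ((y' : Y) : X) = z} := by
        have : y ∈ (Subtype.val ⁻¹' {z | ∃ n : ℤ, (σ ^ n) ((y : Y) : X) = z} : Set Y) :=
          ⟨0, by simp⟩
        have hEq' : (Subtype.val ⁻¹' {z | ∃ n : ℤ, (σ ^ n) ((y : Y) : X) = z} : Set Y) =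
            Subtype.val ⁻¹' {z | ∃ n : ℤ, (σ ^ n) ((y' : Y) : X) = z} := hEq
        rw [hEq'] at this
        exact this
      rw [orbit_eq_of_mem σ hy]
    · rintro B ⟨y, rfl⟩
      exact ⟨{z | ∃ n : ℤ, (σ ^ n) ((y : Y) : X) = z}, ⟨y, rfl⟩,
        (key_lemma Y σ σY hσY y).symm⟩
  exact ⟨hbij, Nat.card_congr (hbij.equiv _)⟩
end

section
/- Let α : Y → X be an injective map between finite sets, and σ, τ permutations of X with τ(α(Y)) = α(Y). Define τ̄ ∈ S(X) by τ̄(x) = τ(x) for x ∉ α(Y) and τ̄(x) = x for x ∈ α(Y). Then the induced permutation satisfies τ_α(y) = α⁻¹(τ(α(y))) for all y ∈ Y, and (στ)_α = (στ̄)_α ∘ τ_α. -/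
/-- `e` is the permutation of `Y` induced (first-return) by `σ` through the injection `α`. -/
def IsInducedPerm {X Y : Type*} (α : Y → X) (σ : Equiv.Perm X) (e : Equiv.Perm Y) : Prop :=
  ∀ y : Y, ∃ m : ℕ, 1 ≤ m ∧
    (∀ k : ℕ, 1 ≤ k → k < m → (σ ^ k) (α y) ∉ Set.range α) ∧
    α (e y) = (σ ^ m) (α y)

theorem stmt_11 {X Y : Type*} [Fintype X] [Fintype Y] (α : Y → X) (hα : Function.Injective α)
    (σ τ τb : Equiv.Perm X)
    (hτ : τ '' Set.range α = Set.range α)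
    (hτb1 : ∀ x ∉ Set.range α, τb x = τ x) (hτb2 : ∀ x ∈ Set.range α, τb x = x)
    (eτ eστ eστb : Equiv.Perm Y)
    (heτ : IsInducedPerm α τ eτ)
    (heστ : IsInducedPerm α (σ * τ) eστ)
    (heστb : IsInducedPerm α (σ * τb) eστb) :
    (∀ y : Y, α (eτ y) = τ (α y)) ∧ eστ = eστb * eτ := by
  have hrange : ∀ x ∈ Set.range α, τ x ∈ Set.range α := by
    intro x hx
    rw [← hτ]
    exact ⟨x, hx, rfl⟩
  have h1 : ∀ y : Y, α (eτ y) = τ (α y) := by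
    intro y
    obtain ⟨m, hm1, hmk, hme⟩ := heτ y
    have hm : m = 1 := by
      by_contra h
      have hlt : (1 : ℕ) < m := lt_of_le_of_ne hm1 (Ne.symm h)
      exact hmk 1 le_rfl hlt (by simpa using hrange _ ⟨y, rfl⟩)
    rw [hme, hm, pow_one]
  refine ⟨h1, ?_⟩
  ext y
  simp only [Equiv.Perm.mul_apply]
  obtain ⟨m, hm1, hmk, hme⟩ := heστ y
  -- key: iterates agree
  have key : ∀ k : ℕ, 1 ≤ k → k ≤ m →
      ((σ * τb) ^ k) (α (eτ y)) = ((σ * τ) ^ k) (α y) := by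
    intro k hk1 hkm
    induction k with
    | zero => omega
    | succ n ih =>
      rcases Nat.eq_or_lt_of_le hk1 with h | h
      · -- n = 0, k = 1
        have hn : n = 0 := by omega
        subst hn
        simp only [zero_add, pow_one, Equiv.Perm.mul_apply]
        rw [hτb2 _ ⟨eτ y, rfl⟩, h1 y]
      · have hn1 : 1 ≤ n := by omega
        have hnm : n ≤ m := by omega
        have hnm' : n < m := by omega
        have ihn := ih hn1 hnm
        have hnot : ((σ * τ) ^ n) (α y) ∉ Set.range α := hmk n hn1 hnm'
        have hstep : ∀ (π : Equiv.Perm X) (z : X), (π ^ (n + 1)) z = π ((π ^ n) z) := by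
          intro π z
          rw [pow_succ']
          rfl
        rw [hstep, hstep, ihn]
        simp only [Equiv.Perm.mul_apply]
        rw [hτb1 _ hnot]
  obtain ⟨m', hm'1, hm'k, hm'e⟩ := heστb (eτ y)
  have hmm : m' = m := by
    by_contra h
    rcases lt_or_gt_of_ne h with h | h
    · -- m' < m : v_{m'} ∈ range but equals u_{m'} ∉ range
      have := hmk m' hm'1 h
      rw [← key m' hm'1 (le_of_lt h), ← hm'e] at this
      exact this ⟨_, rfl⟩
    · -- m < m' : v_m ∈ range contradicts hm'k
      have := hm'k m hm1 h
      rw [key m hm1 le_rfl, ← hme] at this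
      exact this ⟨_, rfl⟩
  apply hα
  rw [hme, hm'e, hmm, key m hm1 le_rfl]
end

section
/- Let α : Y → X be injective between finite sets and σ a permutation of X such that every σ-orbit intersects α(Y). Then σ and the induced permutation σ_α ∈ S(Y) have equal numbers of orbits: o(σ) = o(σ_α). -/
section Aux
variable {X Y : Type*}

def sOrb (σ : Equiv.Perm X) (x : X) : Set X := {z | ∃ n : ℤ, (σ ^ n) x = z}

lemma sOrb_eq_iff (σ : Equiv.Perm X) (x x' : X) :
    sOrb σ x = sOrb σ x' ↔ ∃ n : ℤ, (σ ^ n) x = x' := by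
  constructor
  · intro h
    have hx' : x' ∈ sOrb σ x' := ⟨0, rfl⟩
    rw [← h] at hx'
    exact hx'
  · rintro ⟨n, rfl⟩
    ext z
    constructor
    · rintro ⟨k, rfl⟩
      refine ⟨k - n, ?_⟩
      rw [← Equiv.Perm.mul_apply, ← zpow_add]
      ring_nf
    · rintro ⟨k, rfl⟩
      refine ⟨k + n, ?_⟩
      rw [← Equiv.Perm.mul_apply, ← zpow_add]

lemma fwd {α : Y → X} {σ : Equiv.Perm X} {e : Equiv.Perm Y} (he : IsInducedPerm α σ e)
    (y : Y) (n : ℤ) : ∃ k : ℤ, (σ ^ k) (α y) = α ((e ^ n) y) := by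
  induction n using Int.induction_on with
  | zero => exact ⟨0, rfl⟩
  | succ n ih =>
    obtain ⟨k, hk⟩ := ih
    obtain ⟨m, _, _, hm⟩ := he ((e ^ (n : ℤ)) y)
    rw [← zpow_natCast σ m] at hm
    refine ⟨(m : ℤ) + k, ?_⟩
    have h0 : (e ^ ((n : ℤ) + 1)) y = e ((e ^ (n : ℤ)) y) := by
      rw [add_comm, zpow_add, zpow_one, Equiv.Perm.mul_apply]
    rw [h0, hm, ← hk, ← Equiv.Perm.mul_apply, ← zpow_add]
  | pred n ih =>
    obtain ⟨k, hk⟩ := ih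
    obtain ⟨m, _, _, hm⟩ := he ((e ^ (-(n : ℤ) - 1)) y)
    rw [← zpow_natCast σ m] at hm
    refine ⟨k - (m : ℤ), ?_⟩
    have h1 : (e ^ (-(n : ℤ))) y = e ((e ^ (-(n : ℤ) - 1)) y) := by
      rw [← Equiv.Perm.mul_apply, ← zpow_one_add]
      norm_num
    rw [h1, hm] at hk
    have h2 : (σ ^ (k - (m : ℤ))) (α y) = (σ ^ (-(m : ℤ))) ((σ ^ k) (α y)) := by
      rw [← Equiv.Perm.mul_apply, ← zpow_add]; ring_nf
    rw [h2, hk, ← Equiv.Perm.mul_apply, ← zpow_add]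
    simp

lemma bwd_nat {α : Y → X} (hα : Function.Injective α) {σ : Equiv.Perm X} {e : Equiv.Perm Y}
    (he : IsInducedPerm α σ e) :
    ∀ n : ℕ, ∀ y y' : Y, (σ ^ n) (α y) = α y' → ∃ k : ℕ, (e ^ k) y = y' := by
  intro n
  induction n using Nat.strong_induction_on with
  | _ n ih =>
    intro y y' hyy'
    rcases Nat.eq_zero_or_pos n with rfl | hn
    · exact ⟨0, hα hyy'⟩
    · obtain ⟨m, hm1, hmin, hm⟩ := he y
      have hmn : m ≤ n := by
        by_contra h
        push_neg at h
        exact hmin n hn h ⟨y', hyy'.symm⟩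
      have hσ : (σ ^ (n - m)) (α (e y)) = α y' := by
        rw [hm, ← Equiv.Perm.mul_apply, ← pow_add, Nat.sub_add_cancel hmn, hyy']
      have hlt : n - m < n := Nat.sub_lt hn hm1
      obtain ⟨k, hk⟩ := ih (n - m) hlt (e y) y' hσ
      refine ⟨k + 1, ?_⟩
      rw [pow_add, pow_one, Equiv.Perm.mul_apply, hk]

lemma bwd {α : Y → X} (hα : Function.Injective α) {σ : Equiv.Perm X} {e : Equiv.Perm Y}
    (he : IsInducedPerm α σ e) (y y' : Y) (n : ℤ) (h : (σ ^ n) (α y) = α y') :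
    ∃ k : ℤ, (e ^ k) y = y' := by
  rcases le_or_gt 0 n with hn | hn
  · lift n to ℕ using hn
    rw [zpow_natCast] at h
    obtain ⟨k, hk⟩ := bwd_nat hα he n y y' h
    exact ⟨k, by rw [zpow_natCast]; exact hk⟩
  · have h' : (σ ^ (-n)) (α y') = α y := by
      rw [← h, ← Equiv.Perm.mul_apply, ← zpow_add]
      simp
    lift (-n) to ℕ using (by omega) with m hm
    rw [zpow_natCast] at h'
    obtain ⟨k, hk⟩ := bwd_nat hα he m y' y h'
    refine ⟨-(k : ℤ), ?_⟩
    have := congrArg (e ^ (-(k : ℤ))) hk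
    rw [← Equiv.Perm.mul_apply, ← zpow_natCast e k, ← zpow_add] at this
    simpa using this.symm

end Aux

theorem stmt_12 {X Y : Type*} [Fintype X] [Fintype Y] (α : Y → X) (hα : Function.Injective α)
    (σ : Equiv.Perm X) (e : Equiv.Perm Y) (he : IsInducedPerm α σ e)
    (hmeet : ∀ x : X, ∃ n : ℤ, (σ ^ n) x ∈ Set.range α) :
    Nat.card (orbits σ) = Nat.card (orbits e) := by
  have horb : ∀ x : X, ∃ y : Y, ∃ n : ℤ, (σ ^ n) x = α y := by
    intro x
    obtain ⟨n, y, hy⟩ := hmeet x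
    exact ⟨y, n, hy.symm⟩
  -- choice functions
  choose yOf nOf hOf using horb
  have hσorb : orbits σ = {A | ∃ x, A = sOrb σ x} := rfl
  have heorb : orbits e = {B | ∃ y, B = sOrb e y} := rfl
  choose xOf hxOf using fun (A : orbits σ) => A.2
  -- define F
  have hF : ∀ A : orbits σ, sOrb e (yOf (xOf A)) ∈ orbits e := fun A => ⟨_, rfl⟩
  let F : orbits σ → orbits e := fun A => ⟨sOrb e (yOf (xOf A)), hF A⟩
  have hbij : Function.Bijective F := by
    constructor
    · intro A A' hAA'
      have h1 : sOrb e (yOf (xOf A)) = sOrb e (yOf (xOf A')) := congrArg Subtype.val hAA'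
      obtain ⟨k, hk⟩ := (sOrb_eq_iff e _ _).mp h1
      obtain ⟨j, hj⟩ := fwd he (yOf (xOf A)) k
      rw [hk] at hj
      -- σ-orbit: xOf A ~ α (yOf (xOf A)) ~ α (yOf (xOf A')) ~ xOf A'
      have hx : (σ ^ (nOf (xOf A))) (xOf A) = α (yOf (xOf A)) := hOf _
      have hx' : (σ ^ (nOf (xOf A'))) (xOf A') = α (yOf (xOf A')) := hOf _
      have : ∃ n : ℤ, (σ ^ n) (xOf A) = xOf A' := by
        refine ⟨nOf (xOf A) + j - nOf (xOf A'), ?_⟩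
        have e1 : (σ ^ (nOf (xOf A) + j - nOf (xOf A'))) (xOf A)
            = (σ ^ (-(nOf (xOf A')))) ((σ ^ j) ((σ ^ (nOf (xOf A))) (xOf A))) := by
          rw [← Equiv.Perm.mul_apply, ← Equiv.Perm.mul_apply, ← zpow_add, ← zpow_add]
          ring_nf
        rw [e1, hx, hj, ← hx', ← Equiv.Perm.mul_apply, ← zpow_add]
        simp
      apply Subtype.ext
      rw [hxOf A, hxOf A']
      exact (sOrb_eq_iff σ _ _).mpr this
    · rintro ⟨B, y, rfl⟩
      refine ⟨⟨sOrb σ (α y), ⟨α y, rfl⟩⟩, ?_⟩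
      apply Subtype.ext
      show sOrb e (yOf (xOf ⟨sOrb σ (α y), _⟩)) = sOrb e y
      set A : orbits σ := ⟨sOrb σ (α y), ⟨α y, rfl⟩⟩
      have h1 : sOrb σ (α y) = sOrb σ (xOf A) := hxOf A
      obtain ⟨n, hn⟩ := (sOrb_eq_iff σ _ _).mp h1
      have h2 : (σ ^ (nOf (xOf A))) (xOf A) = α (yOf (xOf A)) := hOf _
      have h3 : (σ ^ (nOf (xOf A) + n)) (α y) = α (yOf (xOf A)) := by
        rw [zpow_add, Equiv.Perm.mul_apply, hn, h2]
      obtain ⟨k, hk⟩ := bwd hα he y (yOf (xOf A)) _ h3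
      exact ((sOrb_eq_iff e _ _).mpr ⟨k, hk⟩).symm
  exact Nat.card_congr (Equiv.ofBijective F hbij)
end

section
/- Let n ≥ 5 and 1 ≤ i₁ < i₂ < i₃ < i₄ ≤ n. Then the permutation C̃ = (1,2,…,n)·(i₁ i₃)·(i₂ i₄) of {1,…,n} (product of the long cycle with the two transpositions) is itself an n-cycle. -/
private lemma chain_aux {m : ℕ} (σ : Equiv.Perm (Fin (m+1))) :
    ∀ (k : ℕ) (x y : Fin (m+1)), y.val - x.val = k → x ≤ y →
      (∀ z, x ≤ z → z < y → σ z = z + 1) → σ.SameCycle x y := by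
  intro k
  induction k with
  | zero =>
    intro x y hk hxy _
    have hle := Fin.le_def.1 hxy
    have : x = y := Fin.ext (by omega)
    exact this ▸ Equiv.Perm.SameCycle.refl σ x
  | succ k ih =>
    intro x y hk hxy hstep
    have hlt : x < y := Fin.lt_def.2 (by omega)
    have hx1 : (x+1).val = x.val + 1 := Fin.val_add_one_of_lt (hlt.trans_le (Fin.le_last y))
    have h1 : σ x = x + 1 := hstep x le_rfl hlt
    have s : σ.SameCycle x (x+1) := ⟨1, by rw [zpow_one]; exact h1⟩
    have hlt' := Fin.lt_def.1 hlt
    exact s.trans (ih (x+1) y (by omega) (Fin.le_def.2 (by omega))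
      (fun z hz hz' => hstep z (le_trans (Fin.le_def.2 (by omega)) hz) hz'))

theorem stmt_13 (n : ℕ) (hn : 5 ≤ n) (i1 i2 i3 i4 : Fin n)
    (h12 : i1 < i2) (h23 : i2 < i3) (h34 : i3 < i4) :
    (finRotate n * Equiv.swap i1 i3 * Equiv.swap i2 i4).IsCycle ∧
      (finRotate n * Equiv.swap i1 i3 * Equiv.swap i2 i4).support = Finset.univ := by
  obtain ⟨m, rfl⟩ : ∃ m, n = m + 1 := ⟨n - 1, by omega⟩
  have hm : 4 ≤ m := by omega
  set σ := finRotate (m+1) * Equiv.swap i1 i3 * Equiv.swap i2 i4 with hσ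
  have hv12 : i1.val < i2.val := Fin.lt_def.1 h12
  have hv23 : i2.val < i3.val := Fin.lt_def.1 h23
  have hv34 : i3.val < i4.val := Fin.lt_def.1 h34
  have hv4 : i4.val ≤ m := Fin.is_le i4
  have vA1 : (i1+1).val = i1.val + 1 :=
    Fin.val_add_one_of_lt (h12.trans_le (Fin.le_last i2))
  have vB1 : (i2+1).val = i2.val + 1 :=
    Fin.val_add_one_of_lt (h23.trans_le (Fin.le_last i3))
  have vC1 : (i3+1).val = i3.val + 1 :=
    Fin.val_add_one_of_lt (h34.trans_le (Fin.le_last i4))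
  have happ : ∀ x, σ x = finRotate (m+1) (Equiv.swap i1 i3 (Equiv.swap i2 i4 x)) :=
    fun x => rfl
  have w24_1 : Equiv.swap i2 i4 i1 = i1 :=
    Equiv.swap_apply_of_ne_of_ne (Fin.ne_of_val_ne (by omega)) (Fin.ne_of_val_ne (by omega))
  have w24_3 : Equiv.swap i2 i4 i3 = i3 :=
    Equiv.swap_apply_of_ne_of_ne (Fin.ne_of_val_ne (by omega)) (Fin.ne_of_val_ne (by omega))
  have w13_4 : Equiv.swap i1 i3 i4 = i4 :=
    Equiv.swap_apply_of_ne_of_ne (Fin.ne_of_val_ne (by omega)) (Fin.ne_of_val_ne (by omega))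
  have w13_2 : Equiv.swap i1 i3 i2 = i2 :=
    Equiv.swap_apply_of_ne_of_ne (Fin.ne_of_val_ne (by omega)) (Fin.ne_of_val_ne (by omega))
  have hA : σ i1 = i3 + 1 := by
    rw [happ, w24_1, Equiv.swap_apply_left, finRotate_succ_apply]
  have hB : σ i2 = i4 + 1 := by
    rw [happ, Equiv.swap_apply_left, w13_4, finRotate_succ_apply]
  have hC : σ i3 = i1 + 1 := by
    rw [happ, w24_3, Equiv.swap_apply_right, finRotate_succ_apply]
  have hD : σ i4 = i2 + 1 := by
    rw [happ, Equiv.swap_apply_right, w13_2, finRotate_succ_apply]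
  have hns : ∀ z : Fin (m+1), z.val ≠ i1.val → z.val ≠ i2.val → z.val ≠ i3.val →
      z.val ≠ i4.val → σ z = z + 1 := by
    intro z h1 h2 h3 h4
    rw [happ, Equiv.swap_apply_of_ne_of_ne (Fin.ne_of_val_ne h2) (Fin.ne_of_val_ne h4),
      Equiv.swap_apply_of_ne_of_ne (Fin.ne_of_val_ne h1) (Fin.ne_of_val_ne h3),
      finRotate_succ_apply]
  have chainv : ∀ x y : Fin (m+1), x.val ≤ y.val →
      (∀ z : Fin (m+1), x.val ≤ z.val → z.val < y.val → σ z = z + 1) → σ.SameCycle x y :=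
    fun x y hxy hstep => chain_aux σ _ x y rfl (Fin.le_def.2 hxy)
      (fun z hz hz' => hstep z (Fin.le_def.1 hz) (Fin.lt_def.1 hz'))
  -- links
  have s1 : σ.SameCycle i1 (i3+1) := ⟨1, by rw [zpow_one]; exact hA⟩
  have sC : σ.SameCycle i3 (i1+1) := ⟨1, by rw [zpow_one]; exact hC⟩
  have sB : σ.SameCycle i2 (i4+1) := ⟨1, by rw [zpow_one]; exact hB⟩
  have sD : σ.SameCycle i4 (i2+1) := ⟨1, by rw [zpow_one]; exact hD⟩
  -- chains
  have s2 : σ.SameCycle (i3+1) i4 :=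
    chainv _ _ (by omega) (fun z hz hz' => hns z (by omega) (by omega) (by omega) (by omega))
  have s4 : σ.SameCycle (i2+1) i3 :=
    chainv _ _ (by omega) (fun z hz hz' => hns z (by omega) (by omega) (by omega) (by omega))
  have s6 : σ.SameCycle (i1+1) i2 :=
    chainv _ _ (by omega) (fun z hz hz' => hns z (by omega) (by omega) (by omega) (by omega))
  have t1 : σ.SameCycle i1 i4 := s1.trans s2
  have t2 : σ.SameCycle i1 i3 := (t1.trans sD).trans s4
  have t3 : σ.SameCycle i1 i2 := (t2.trans sC).trans s6
  have t4 : σ.SameCycle i1 (i4+1) := t3.trans sB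
  have key : ∀ y : Fin (m+1), σ.SameCycle i1 y := by
    intro y
    have hy : y.val ≤ m := Fin.is_le y
    rcases le_or_gt y.val i1.val with hy1 | hy1
    · -- wrap-around case
      have hwrap : σ.SameCycle i1 (0 : Fin (m+1)) := by
        rcases eq_or_lt_of_le hv4 with h4m | h4m
        · have : i4 = Fin.last m := Fin.ext (by simpa using h4m)
          have h0 : i4 + 1 = 0 := by rw [this]; exact Fin.last_add_one m
          exact h0 ▸ t4
        · have vD1 : (i4+1).val = i4.val + 1 :=
            Fin.val_add_one_of_lt (Fin.lt_def.2 (by simpa using h4m))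
          have s8 : σ.SameCycle (i4+1) (Fin.last m) :=
            chainv _ _ (by simp; omega) (fun z hz hz' =>
              hns z (by omega) (by omega) (by omega) (by omega))
          have hlast : σ (Fin.last m) = 0 := by
            rw [hns (Fin.last m) (by simp; omega) (by simp; omega) (by simp; omega)
              (by simp; omega)]
            exact Fin.last_add_one m
          have s9 : σ.SameCycle (Fin.last m) (0 : Fin (m+1)) :=
            ⟨1, by rw [zpow_one]; exact hlast⟩
          exact (t4.trans s8).trans s9
      exact hwrap.trans (chainv _ _ (by simp) (fun z hz hz' =>
        hns z (by omega) (by omega) (by omega) (by omega)))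
    · rcases le_or_gt y.val i2.val with hy2 | hy2
      · exact (t2.trans sC).trans (chainv _ _ (by omega) (fun z hz hz' =>
          hns z (by omega) (by omega) (by omega) (by omega)))
      · rcases le_or_gt y.val i3.val with hy3 | hy3
        · exact (t1.trans sD).trans (chainv _ _ (by omega) (fun z hz hz' =>
            hns z (by omega) (by omega) (by omega) (by omega)))
        · rcases le_or_gt y.val i4.val with hy4 | hy4
          · exact s1.trans (chainv _ _ (by omega) (fun z hz hz' =>
              hns z (by omega) (by omega) (by omega) (by omega)))
          · have vD1 : (i4+1).val = i4.val + 1 :=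
              Fin.val_add_one_of_lt (Fin.lt_def.2 (by simp; omega))
            exact t4.trans (chainv _ _ (by omega) (fun z hz hz' =>
              hns z (by omega) (by omega) (by omega) (by omega)))
  have hfix : ∀ y : Fin (m+1), σ y ≠ y := by
    intro y
    by_cases e1 : y = i1
    · rw [e1, hA]; exact Fin.ne_of_val_ne (by omega)
    by_cases e2 : y = i2
    · rw [e2, hB]
      rcases eq_or_lt_of_le hv4 with h4m | h4m
      · have : i4 = Fin.last m := Fin.ext (by simpa using h4m)
        rw [this, Fin.last_add_one]
        exact Fin.ne_of_val_ne (by simp; omega)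
      · have vD1 : (i4+1).val = i4.val + 1 :=
          Fin.val_add_one_of_lt (Fin.lt_def.2 (by simpa using h4m))
        exact Fin.ne_of_val_ne (by omega)
    by_cases e3 : y = i3
    · rw [e3, hC]; exact Fin.ne_of_val_ne (by omega)
    by_cases e4 : y = i4
    · rw [e4, hD]; exact Fin.ne_of_val_ne (by omega)
    · rw [hns y (fun h => e1 (Fin.ext h)) (fun h => e2 (Fin.ext h))
        (fun h => e3 (Fin.ext h)) (fun h => e4 (Fin.ext h))]
      rcases eq_or_lt_of_le (Fin.le_last y) with hl | hl
      · rw [hl, Fin.last_add_one]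
        exact Fin.ne_of_val_ne (by simp; omega)
      · exact Fin.ne_of_val_ne (by rw [Fin.val_add_one_of_lt hl]; omega)
  constructor
  · exact ⟨i1, hfix i1, fun y _ => key y⟩
  · exact Finset.eq_univ_iff_forall.2 (fun y => Equiv.Perm.mem_support.2 (hfix y))
end

section
/- Let n ≥ 5, 1 ≤ i₁ < i₂ < i₃ < i₄ ≤ n, and let σ = (1,…,n)·(i₁ i₃)·(i₂ i₄). Then no σ-orbit is contained in the set {i₁, i₂, i₃, i₄}; equivalently, every σ-orbit meets {1,…,n} \ {i₁,i₂,i₃,i₄}. -/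
theorem stmt_14 (n : ℕ) (hn : 5 ≤ n) (i1 i2 i3 i4 : Fin n)
    (h12 : i1 < i2) (h23 : i2 < i3) (h34 : i3 < i4) :
    ∀ x : Fin n, ∃ k : ℤ,
      ((finRotate n * Equiv.swap i1 i3 * Equiv.swap i2 i4) ^ k) x ∉
        ({i1, i2, i3, i4} : Set (Fin n)) := by
  obtain ⟨m, rfl⟩ : ∃ m, n = m + 1 := ⟨n - 1, by omega⟩
  intro x
  by_contra hc
  push_neg at hc
  set σ := finRotate (m+1) * Equiv.swap i1 i3 * Equiv.swap i2 i4 with hσ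
  set S : Set (Fin (m+1)) := {i1, i2, i3, i4} with hSdef
  have hS : ∀ k : ℕ, (σ ^ k) x ∈ S := by
    intro k
    have := hc (k : ℤ)
    rwa [zpow_natCast] at this
  have hab : i1.val < i2.val := h12
  have hbc : i2.val < i3.val := h23
  have hcd : i3.val < i4.val := h34
  have hdm : i4.val < m + 1 := i4.isLt
  have ne12 : i1 ≠ i2 := Fin.ne_of_lt h12
  have ne13 : i1 ≠ i3 := Fin.ne_of_lt (h12.trans h23)
  have ne14 : i1 ≠ i4 := Fin.ne_of_lt ((h12.trans h23).trans h34)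
  have ne23 : i2 ≠ i3 := Fin.ne_of_lt h23
  have ne24 : i2 ≠ i4 := Fin.ne_of_lt (h23.trans h34)
  have ne34 : i3 ≠ i4 := Fin.ne_of_lt h34
  have hs1 : σ i1 = i3 + 1 := by
    simp [hσ, Equiv.Perm.mul_apply,
      Equiv.swap_apply_of_ne_of_ne ne12 ne14, Equiv.swap_apply_left,
      finRotate_succ_apply]
  have hs2 : σ i2 = i4 + 1 := by
    simp [hσ, Equiv.Perm.mul_apply, Equiv.swap_apply_left,
      Equiv.swap_apply_of_ne_of_ne ne14.symm ne34.symm, finRotate_succ_apply]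
  have hs3 : σ i3 = i1 + 1 := by
    simp [hσ, Equiv.Perm.mul_apply,
      Equiv.swap_apply_of_ne_of_ne ne23.symm ne34, Equiv.swap_apply_right,
      finRotate_succ_apply]
  have hs4 : σ i4 = i2 + 1 := by
    simp [hσ, Equiv.Perm.mul_apply, Equiv.swap_apply_right,
      Equiv.swap_apply_of_ne_of_ne ne12.symm ne23, finRotate_succ_apply]
  have hlt1 : i1 < Fin.last m := by
    rw [Fin.lt_def]; simp only [Fin.val_last]; omega
  have hlt2 : i2 < Fin.last m := by
    rw [Fin.lt_def]; simp only [Fin.val_last]; omega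
  have hlt3 : i3 < Fin.last m := by
    rw [Fin.lt_def]; simp only [Fin.val_last]; omega
  have hv1 : (i1 + 1).val = i1.val + 1 := Fin.val_add_one_of_lt hlt1
  have hv2 : (i2 + 1).val = i2.val + 1 := Fin.val_add_one_of_lt hlt2
  have hv3 : (i3 + 1).val = i3.val + 1 := Fin.val_add_one_of_lt hlt3
  have memS : ∀ y : Fin (m+1), y ∈ S → y = i1 ∨ y = i2 ∨ y = i3 ∨ y = i4 := by
    intro y hy
    simpa [hSdef, Set.mem_insert_iff] using hy
  have L1 : i3 + 1 ∈ S → i3 + 1 = i4 := by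
    intro h
    rcases memS _ h with h | h | h | h
    · exact absurd (congrArg Fin.val h) (by rw [hv3]; omega)
    · exact absurd (congrArg Fin.val h) (by rw [hv3]; omega)
    · exact absurd (congrArg Fin.val h) (by rw [hv3]; omega)
    · exact h
  have L2 : i2 + 1 ∈ S → i2 + 1 = i3 := by
    intro h
    rcases memS _ h with h | h | h | h
    · exact absurd (congrArg Fin.val h) (by rw [hv2]; omega)
    · exact absurd (congrArg Fin.val h) (by rw [hv2]; omega)
    · exact h
    · exact absurd (congrArg Fin.val h) (by rw [hv2]; omega)
  have L3 : i1 + 1 ∈ S → i1 + 1 = i2 := by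
    intro h
    rcases memS _ h with h | h | h | h
    · exact absurd (congrArg Fin.val h) (by rw [hv1]; omega)
    · exact h
    · exact absurd (congrArg Fin.val h) (by rw [hv1]; omega)
    · exact absurd (congrArg Fin.val h) (by rw [hv1]; omega)
  have L4 : i4 + 1 ∈ S → i4 + 1 = i1 ∧ i4.val = m ∧ i1.val = 0 := by
    intro h
    by_cases hlast : i4 = Fin.last m
    · have hdval : i4.val = m := by rw [hlast]; rfl
      have h0 : (i4 + 1).val = 0 := by
        rw [hlast]; simp
      have ha0 : i1.val = 0 := by
        rcases memS _ h with h' | h' | h' | h' <;>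
          have hv := congrArg Fin.val h' <;> rw [h0] at hv <;> omega
      refine ⟨?_, hdval, ha0⟩
      apply Fin.ext
      rw [h0, ha0]
    · have hlt : i4 < Fin.last m := lt_of_le_of_ne (Fin.le_last _) hlast
      have hv4 : (i4 + 1).val = i4.val + 1 := Fin.val_add_one_of_lt hlt
      exfalso
      rcases memS _ h with h' | h' | h' | h' <;>
        have hv := congrArg Fin.val h' <;> rw [hv4] at hv <;> omega
  -- the chain of iterates
  have c0 : x ∈ S := by simpa using hS 0
  have c1 : σ x ∈ S := by simpa [pow_succ, pow_zero, Equiv.Perm.mul_apply] using hS 1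
  have c2 : σ (σ x) ∈ S := by
    simpa [pow_succ, pow_zero, Equiv.Perm.mul_apply] using hS 2
  have c3 : σ (σ (σ x)) ∈ S := by
    simpa [pow_succ, pow_zero, Equiv.Perm.mul_apply] using hS 3
  have c4 : σ (σ (σ (σ x))) ∈ S := by
    simpa [pow_succ, pow_zero, Equiv.Perm.mul_apply] using hS 4
  have final : i1.val + 1 = i2.val → i2.val + 1 = i3.val → i3.val + 1 = i4.val →
      i4.val = m → i1.val = 0 → False := by
    intro e1 e2 e3 e4 e5; omega
  rcases memS _ c0 with hx | hx | hx | hx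
  · subst hx
    rw [hs1] at c1
    have e34 := L1 c1
    rw [hs1, e34, hs4] at c2
    have e23 := L2 c2
    rw [hs1, e34, hs4, e23, hs3] at c3
    have e12 := L3 c3
    rw [hs1, e34, hs4, e23, hs3, e12, hs2] at c4
    obtain ⟨e41, hd, ha⟩ := L4 c4
    exact final (hv1 ▸ congrArg Fin.val e12) (hv2 ▸ congrArg Fin.val e23)
      (hv3 ▸ congrArg Fin.val e34) hd ha
  · subst hx
    rw [hs2] at c1
    obtain ⟨e41, hd, ha⟩ := L4 c1
    rw [hs2, e41, hs1] at c2
    have e34 := L1 c2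
    rw [hs2, e41, hs1, e34, hs4] at c3
    have e23 := L2 c3
    rw [hs2, e41, hs1, e34, hs4, e23, hs3] at c4
    have e12 := L3 c4
    exact final (hv1 ▸ congrArg Fin.val e12) (hv2 ▸ congrArg Fin.val e23)
      (hv3 ▸ congrArg Fin.val e34) hd ha
  · subst hx
    rw [hs3] at c1
    have e12 := L3 c1
    rw [hs3, e12, hs2] at c2
    obtain ⟨e41, hd, ha⟩ := L4 c2
    rw [hs3, e12, hs2, e41, hs1] at c3
    have e34 := L1 c3
    rw [hs3, e12, hs2, e41, hs1, e34, hs4] at c4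
    have e23 := L2 c4
    exact final (hv1 ▸ congrArg Fin.val e12) (hv2 ▸ congrArg Fin.val e23)
      (hv3 ▸ congrArg Fin.val e34) hd ha
  · subst hx
    rw [hs4] at c1
    have e23 := L2 c1
    rw [hs4, e23, hs3] at c2
    have e12 := L3 c2
    rw [hs4, e23, hs3, e12, hs2] at c3
    obtain ⟨e41, hd, ha⟩ := L4 c3
    rw [hs4, e23, hs3, e12, hs2, e41, hs1] at c4
    have e34 := L1 c4
    exact final (hv1 ▸ congrArg Fin.val e12) (hv2 ▸ congrArg Fin.val e23)
      (hv3 ▸ congrArg Fin.val e34) hd ha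
end

section
/- Let n ≥ 5, 1 ≤ i₁ < i₂ < i₃ < i₄ ≤ n, let π ∈ Sₙ be an involution with π(i₁) = i₃ and π(i₂) = i₄, and let σ = (1,…,n)·π. Then no σ-orbit is contained in {i₁,i₂,i₃,i₄}. -/
theorem stmt_15 (n : ℕ) (hn : 5 ≤ n) (i1 i2 i3 i4 : Fin n)
    (h12 : i1 < i2) (h23 : i2 < i3) (h34 : i3 < i4)
    (π : Equiv.Perm (Fin n)) (hinv : π * π = 1) (hπ1 : π i1 = i3) (hπ2 : π i2 = i4) :
    ∀ x : Fin n, ∃ k : ℤ,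
      ((finRotate n * π) ^ k) x ∉ ({i1, i2, i3, i4} : Set (Fin n)) := by
  obtain ⟨m, rfl⟩ : ∃ m, n = m + 1 := ⟨n - 1, by omega⟩
  intro x
  by_contra hcon
  push_neg at hcon
  set σ := finRotate (m + 1) * π with hσ
  have hππ : ∀ y, π (π y) = y := fun y => by
    have := congrArg (fun p : Equiv.Perm (Fin (m+1)) => p y) hinv
    simpa [Equiv.Perm.mul_apply] using this
  have hπ3 : π i3 = i1 := by rw [← hπ1, hππ]
  have hπ4 : π i4 = i2 := by rw [← hπ2, hππ]
  have hs : ∀ y, σ y = π y + 1 := fun y => by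
    simp [hσ, Equiv.Perm.mul_apply, finRotate_succ_apply]
  have ha : (i1 : ℕ) < i2 := h12
  have hb : (i2 : ℕ) < i3 := h23
  have hc : (i3 : ℕ) < i4 := h34
  have hd : (i4 : ℕ) < m + 1 := i4.isLt
  have memv : ∀ y : Fin (m+1), y ∈ ({i1, i2, i3, i4} : Set (Fin (m+1))) →
      ((y:ℕ) = i1 ∨ (y:ℕ) = i2 ∨ (y:ℕ) = i3 ∨ (y:ℕ) = i4) := by
    intro y hy
    simpa [Set.mem_insert_iff, Set.mem_singleton_iff, Fin.ext_iff] using hy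
  have nowrap : ∀ y : Fin (m+1), (y:ℕ) + 1 ≤ m → ((y + 1 : Fin (m+1)) : ℕ) = (y:ℕ) + 1 := by
    intro y hy
    have h : y ≠ Fin.last m := by
      intro h
      rw [h, Fin.val_last] at hy
      omega
    rw [Fin.val_add_one, if_neg h]
  have wrap : ((i4 + 1 : Fin (m+1)) : ℕ) = 0 ∧ (i4:ℕ) = m ∨
      ((i4 + 1 : Fin (m+1)) : ℕ) = (i4:ℕ) + 1 := by
    rcases eq_or_ne i4 (Fin.last m) with h | h
    · left; subst h; simp
    · right; rw [Fin.val_add_one, if_neg h]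
  have m0 : x ∈ ({i1, i2, i3, i4} : Set (Fin (m+1))) := by simpa using hcon 0
  have m1 : σ x ∈ ({i1, i2, i3, i4} : Set (Fin (m+1))) := by simpa using hcon 1
  have m2 : σ (σ x) ∈ ({i1, i2, i3, i4} : Set (Fin (m+1))) := by
    have := hcon 2
    rw [show (2:ℤ) = 1 + 1 by norm_num, zpow_add, zpow_one] at this
    simpa [Equiv.Perm.mul_apply] using this
  have m3 : σ (σ (σ x)) ∈ ({i1, i2, i3, i4} : Set (Fin (m+1))) := by
    have := hcon 3
    rw [show (3:ℤ) = 1 + 1 + 1 by norm_num, zpow_add, zpow_add, zpow_one] at this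
    simpa [Equiv.Perm.mul_apply] using this
  have m4 : σ (σ (σ (σ x))) ∈ ({i1, i2, i3, i4} : Set (Fin (m+1))) := by
    have := hcon 4
    rw [show (4:ℤ) = 1 + 1 + 1 + 1 by norm_num, zpow_add, zpow_add, zpow_add, zpow_one] at this
    simpa [Equiv.Perm.mul_apply] using this
  rcases memv x m0 with h0 | h0 | h0 | h0
  · -- x = i1
    have hx : x = i1 := Fin.ext h0
    rw [hx] at m1 m2 m3 m4
    simp only [hs] at m1; rw [hπ1] at m1
    have e1 : i3 + 1 = i4 := by
      have := memv _ m1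
      rw [nowrap i3 (by omega)] at this
      exact Fin.ext (by rw [nowrap i3 (by omega)]; omega)
    simp only [hs] at m2; rw [hπ1, e1, hπ4] at m2
    have e2 : i2 + 1 = i3 := by
      have := memv _ m2
      rw [nowrap i2 (by omega)] at this
      exact Fin.ext (by rw [nowrap i2 (by omega)]; omega)
    simp only [hs] at m3; rw [hπ1, e1, hπ4, e2, hπ3] at m3
    have e3 : i1 + 1 = i2 := by
      have := memv _ m3
      rw [nowrap i1 (by omega)] at this
      exact Fin.ext (by rw [nowrap i1 (by omega)]; omega)
    simp only [hs] at m4; rw [hπ1, e1, hπ4, e2, hπ3, e3, hπ2] at m4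
    have := memv _ m4
    have e1' : (i3:ℕ) + 1 = i4 := by
      have := congrArg Fin.val e1
      rwa [nowrap i3 (by omega)] at this
    have e2' : (i2:ℕ) + 1 = i3 := by
      have := congrArg Fin.val e2
      rwa [nowrap i2 (by omega)] at this
    have e3' : (i1:ℕ) + 1 = i2 := by
      have := congrArg Fin.val e3
      rwa [nowrap i1 (by omega)] at this
    rcases wrap with ⟨w1, w2⟩ | w
    · rw [w1] at this; omega
    · rw [w] at this; omega
  · -- x = i2
    have hx : x = i2 := Fin.ext h0
    rw [hx] at m1 m2 m3 m4
    simp only [hs] at m1; rw [hπ2] at m1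
    have e1 : i4 + 1 = i1 := by
      have h' := memv _ m1
      rcases wrap with ⟨w1, w2⟩ | w
      · exact Fin.ext (by rw [w1] at h' ⊢; omega)
      · rw [w] at h'; omega
    simp only [hs] at m2; rw [hπ2, e1, hπ1] at m2
    have e2 : i3 + 1 = i4 := by
      have := memv _ m2
      rw [nowrap i3 (by omega)] at this
      exact Fin.ext (by rw [nowrap i3 (by omega)]; omega)
    simp only [hs] at m3; rw [hπ2, e1, hπ1, e2, hπ4] at m3
    have e3 : i2 + 1 = i3 := by
      have := memv _ m3
      rw [nowrap i2 (by omega)] at this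
      exact Fin.ext (by rw [nowrap i2 (by omega)]; omega)
    simp only [hs] at m4; rw [hπ2, e1, hπ1, e2, hπ4, e3, hπ3] at m4
    have h4 := memv _ m4
    rw [nowrap i1 (by omega)] at h4
    have e2' : (i3:ℕ) + 1 = i4 := by
      have := congrArg Fin.val e2
      rwa [nowrap i3 (by omega)] at this
    have e3' : (i2:ℕ) + 1 = i3 := by
      have := congrArg Fin.val e3
      rwa [nowrap i2 (by omega)] at this
    have e1' := congrArg Fin.val e1
    rcases wrap with ⟨w1, w2⟩ | w
    · rw [w1] at e1'; omega
    · rw [w] at e1'; omega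
  · -- x = i3
    have hx : x = i3 := Fin.ext h0
    rw [hx] at m1 m2 m3 m4
    simp only [hs] at m1; rw [hπ3] at m1
    have e1 : i1 + 1 = i2 := by
      have := memv _ m1
      rw [nowrap i1 (by omega)] at this
      exact Fin.ext (by rw [nowrap i1 (by omega)]; omega)
    simp only [hs] at m2; rw [hπ3, e1, hπ2] at m2
    have e2 : i4 + 1 = i1 := by
      have h' := memv _ m2
      rcases wrap with ⟨w1, w2⟩ | w
      · exact Fin.ext (by rw [w1] at h' ⊢; omega)
      · rw [w] at h'; omega
    simp only [hs] at m3; rw [hπ3, e1, hπ2, e2, hπ1] at m3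
    have e3 : i3 + 1 = i4 := by
      have := memv _ m3
      rw [nowrap i3 (by omega)] at this
      exact Fin.ext (by rw [nowrap i3 (by omega)]; omega)
    simp only [hs] at m4; rw [hπ3, e1, hπ2, e2, hπ1, e3, hπ4] at m4
    have h4 := memv _ m4
    rw [nowrap i2 (by omega)] at h4
    have e1' : (i1:ℕ) + 1 = i2 := by
      have := congrArg Fin.val e1
      rwa [nowrap i1 (by omega)] at this
    have e3' : (i3:ℕ) + 1 = i4 := by
      have := congrArg Fin.val e3
      rwa [nowrap i3 (by omega)] at this
    have e2' := congrArg Fin.val e2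
    rcases wrap with ⟨w1, w2⟩ | w
    · rw [w1] at e2'; omega
    · rw [w] at e2'; omega
  · -- x = i4
    have hx : x = i4 := Fin.ext h0
    rw [hx] at m1 m2 m3 m4
    simp only [hs] at m1; rw [hπ4] at m1
    have e1 : i2 + 1 = i3 := by
      have := memv _ m1
      rw [nowrap i2 (by omega)] at this
      exact Fin.ext (by rw [nowrap i2 (by omega)]; omega)
    simp only [hs] at m2; rw [hπ4, e1, hπ3] at m2
    have e2 : i1 + 1 = i2 := by
      have := memv _ m2
      rw [nowrap i1 (by omega)] at this
      exact Fin.ext (by rw [nowrap i1 (by omega)]; omega)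
    simp only [hs] at m3; rw [hπ4, e1, hπ3, e2, hπ2] at m3
    have e3 : i4 + 1 = i1 := by
      have h' := memv _ m3
      rcases wrap with ⟨w1, w2⟩ | w
      · exact Fin.ext (by rw [w1] at h' ⊢; omega)
      · rw [w] at h'; omega
    simp only [hs] at m4; rw [hπ4, e1, hπ3, e2, hπ2, e3, hπ1] at m4
    have h4 := memv _ m4
    rw [nowrap i3 (by omega)] at h4
    have e1' : (i2:ℕ) + 1 = i3 := by
      have := congrArg Fin.val e1
      rwa [nowrap i2 (by omega)] at this
    have e2' : (i1:ℕ) + 1 = i2 := by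
      have := congrArg Fin.val e2
      rwa [nowrap i1 (by omega)] at this
    have e3' := congrArg Fin.val e3
    rcases wrap with ⟨w1, w2⟩ | w
    · rw [w1] at e3'; omega
    · rw [w] at e3'; omega
end

section
/- Let n ≥ 5, 1 ≤ i₁ < i₂ < i₃ < i₄ ≤ n, π ∈ Sₙ an involution with π(i₁)=i₃, π(i₂)=i₄, and let α : {1,…,n−4} → {1,…,n} be the unique strictly increasing map whose image omits {i₁,i₂,i₃,i₄}. Then the induced involution π_α on {1,…,n−4} satisfies o((1,…,n)π) = o((1,…,n−4)·γ π_α γ⁻¹) for a suitable permutation γ ∈ S_{n−4}; in particular the number of orbits of (1,…,n)π equals the number of orbits of the first-return permutation of (1,…,n)π on the complement of {i₁,i₂,i₃,i₄}. -/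
open Equiv Equiv.Perm

namespace Stmt16Aux

variable {X Y : Type*}

/-- The orbit of a point. -/
def orbit (σ : Equiv.Perm X) (x : X) : Set X := {z | ∃ n : ℤ, (σ ^ n) x = z}

lemma mem_orbit_iff {σ : Equiv.Perm X} {x z : X} : z ∈ orbit σ x ↔ σ.SameCycle x z := Iff.rfl

lemma orbit_mem_orbits (σ : Equiv.Perm X) (x : X) : orbit σ x ∈ orbits σ := ⟨x, rfl⟩

lemma self_mem_orbit (σ : Equiv.Perm X) (x : X) : x ∈ orbit σ x := ⟨0, by simp⟩

lemma orbit_eq_iff {σ : Equiv.Perm X} {x y : X} :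
    orbit σ x = orbit σ y ↔ σ.SameCycle x y := by
  constructor
  · intro h
    have : y ∈ orbit σ x := h ▸ self_mem_orbit σ y
    exact this
  · intro h
    ext z
    exact ⟨fun hz => h.symm.trans hz, fun hz => h.trans hz⟩

lemma forward {α : Y → X} {σ : Equiv.Perm X} {e : Equiv.Perm Y}
    (h : IsInducedPerm α σ e) (y : Y) (k : ℕ) :
    ∃ m : ℕ, α ((e ^ k) y) = (σ ^ m) (α y) := by
  induction k with
  | zero => exact ⟨0, rfl⟩
  | succ k ih =>
    obtain ⟨m, hm⟩ := ih
    obtain ⟨m', -, -, hret⟩ := h ((e ^ k) y)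
    refine ⟨m' + m, ?_⟩
    rw [pow_succ', mul_apply, hret, hm, pow_add, mul_apply]

lemma backward {α : Y → X} (hα : Function.Injective α) {σ : Equiv.Perm X} {e : Equiv.Perm Y}
    (h : IsInducedPerm α σ e) :
    ∀ j : ℕ, ∀ y y' : Y, (σ ^ j) (α y) = α y' → ∃ k : ℕ, (e ^ k) y = y' := by
  intro j
  induction j using Nat.strong_induction_on with
  | _ j ih =>
    intro y y' hj
    obtain ⟨m, hm1, hint, hret⟩ := h y
    rcases lt_or_ge j m with hlt | hle
    · rcases Nat.eq_zero_or_pos j with rfl | hpos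
      · exact ⟨0, hα (by simpa using hj)⟩
      · exact absurd ⟨y', hj.symm⟩ (hint j hpos hlt)
    · have hstep : (σ ^ (j - m)) (α (e y)) = α y' := by
        rw [hret, ← mul_apply, ← pow_add, Nat.sub_add_cancel hle]
        exact hj
      obtain ⟨k, hk⟩ := ih (j - m) (by omega) (e y) y' hstep
      exact ⟨k + 1, by rw [pow_succ, mul_apply]; exact hk⟩

lemma sc_push [Finite Y] {α : Y → X} {σ : Equiv.Perm X} {e : Equiv.Perm Y}
    (h : IsInducedPerm α σ e) {y y' : Y} (hsc : e.SameCycle y y') :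
    σ.SameCycle (α y) (α y') := by
  obtain ⟨k, -, hk⟩ := hsc.exists_pow_eq'
  obtain ⟨m, hm⟩ := forward h y k
  exact ⟨m, by rw [zpow_natCast, ← hm, hk]⟩

lemma sc_pull [Finite X] {α : Y → X} (hα : Function.Injective α) {σ : Equiv.Perm X}
    {e : Equiv.Perm Y} (h : IsInducedPerm α σ e) {y y' : Y}
    (hsc : σ.SameCycle (α y) (α y')) : e.SameCycle y y' := by
  obtain ⟨j, -, hj⟩ := hsc.exists_pow_eq'
  obtain ⟨k, hk⟩ := backward hα h j y y' hj
  exact ⟨k, by rw [zpow_natCast]; exact hk⟩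

lemma card_orbits_eq [Finite X] {α : Y → X} (hα : Function.Injective α)
    {σ : Equiv.Perm X} {e : Equiv.Perm Y} (h : IsInducedPerm α σ e)
    (hmeet : ∀ x : X, ∃ y : Y, σ.SameCycle x (α y)) :
    Nat.card (orbits σ) = Nat.card (orbits e) := by
  classical
  have : Finite Y := Finite.of_injective α hα
  let f : orbits e → orbits σ := fun A => ⟨orbit σ (α A.2.choose), orbit_mem_orbits σ _⟩
  have hspec : ∀ A : orbits e, (A : Set Y) = orbit e A.2.choose := fun A => A.2.choose_spec
  have hinj : Function.Injective f := by
    intro A B hAB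
    have h1 : orbit σ (α A.2.choose) = orbit σ (α B.2.choose) := congrArg Subtype.val hAB
    have h2 : σ.SameCycle (α A.2.choose) (α B.2.choose) := orbit_eq_iff.1 h1
    have h3 : e.SameCycle A.2.choose B.2.choose := sc_pull hα h h2
    apply Subtype.ext
    rw [hspec A, hspec B]
    exact orbit_eq_iff.2 h3
  have hsurj : Function.Surjective f := by
    intro B
    obtain ⟨x, hx⟩ := B.2
    obtain ⟨y, hy⟩ := hmeet x
    refine ⟨⟨orbit e y, orbit_mem_orbits e y⟩, ?_⟩
    apply Subtype.ext
    have hspecA := hspec ⟨orbit e y, orbit_mem_orbits e y⟩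
    have h1 : e.SameCycle (⟨orbit e y, orbit_mem_orbits e y⟩ : orbits e).2.choose y :=
      (orbit_eq_iff.1 hspecA.symm)
    have h2 : σ.SameCycle (α (⟨orbit e y, orbit_mem_orbits e y⟩ : orbits e).2.choose) (α y) :=
      sc_push h h1
    show orbit σ _ = (B : Set X)
    rw [hx]
    exact orbit_eq_iff.2 (h2.trans hy.symm)
  exact (Nat.card_eq_of_bijective f ⟨hinj, hsurj⟩).symm

lemma card_orbits_conj [Finite X] (β : X ≃ Y) (σ : Equiv.Perm X) :
    Nat.card (orbits σ) = Nat.card (orbits (β.permCongr σ)) := by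
  apply card_orbits_eq (α := ⇑β.symm) β.symm.injective (σ := σ)
  · intro y
    refine ⟨1, le_rfl, fun k hk hk' => absurd hk' (by omega), ?_⟩
    simp [Equiv.permCongr_apply]
  · intro x
    exact ⟨β x, by simp [Equiv.Perm.SameCycle.refl]⟩

end Stmt16Aux

theorem stmt_16 (n : ℕ) (hn : 5 ≤ n) (i1 i2 i3 i4 : Fin n)
    (h12 : i1 < i2) (h23 : i2 < i3) (h34 : i3 < i4)
    (π : Equiv.Perm (Fin n)) (hinv : π * π = 1) (hπ1 : π i1 = i3) (hπ2 : π i2 = i4)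
    (α : Fin (n - 4) → Fin n) (hα : StrictMono α)
    (hrange : Set.range α = ({i1, i2, i3, i4} : Set (Fin n))ᶜ)
    (πα : Equiv.Perm (Fin (n - 4))) (hπα : IsInducedPerm α π πα)
    (e : Equiv.Perm (({i1, i2, i3, i4} : Set (Fin n))ᶜ : Set (Fin n)))
    (he : IsInducedPerm (Subtype.val : (({i1, i2, i3, i4} : Set (Fin n))ᶜ : Set (Fin n)) → Fin n)
      (finRotate n * π) e) :
    (∃ γ : Equiv.Perm (Fin (n - 4)),
        Nat.card (orbits (finRotate n * π)) =
          Nat.card (orbits (finRotate (n - 4) * (γ * πα * γ⁻¹)))) ∧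
      Nat.card (orbits (finRotate n * π)) = Nat.card (orbits e) := by
  classical
  obtain ⟨m, rfl⟩ : ∃ m, n = m + 5 := ⟨n - 5, by omega⟩
  clear hn
  have v12 : (i1 : ℕ) < i2 := h12
  have v23 : (i2 : ℕ) < i3 := h23
  have v34 : (i3 : ℕ) < i4 := h34
  have v4 : (i4 : ℕ) < m + 5 := i4.isLt
  have memQ : ∀ z : Fin (m + 5), z ∈ ({i1, i2, i3, i4} : Set (Fin (m + 5))) ↔
      z = i1 ∨ z = i2 ∨ z = i3 ∨ z = i4 := by
    intro z; simp
  have notQ : ∀ z : Fin (m + 5), (z : ℕ) ≠ i1 → (z : ℕ) ≠ i2 → (z : ℕ) ≠ i3 → (z : ℕ) ≠ i4 →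
      z ∉ ({i1, i2, i3, i4} : Set (Fin (m + 5))) := by
    intro z h1 h2 h3 h4 hmem
    rcases (memQ z).1 hmem with rfl | rfl | rfl | rfl <;> simp_all
  have hππ : ∀ z, π (π z) = z := by
    intro z
    have := DFunLike.congr_fun hinv z
    simpa [Equiv.Perm.mul_apply] using this
  have hπ3 : π i3 = i1 := by rw [← hπ1, hππ]
  have hπ4 : π i4 = i2 := by rw [← hπ2, hππ]
  set c : Equiv.Perm (Fin (m + 5)) := finRotate (m + 5) * π with hcdef
  have hcap : ∀ z, c z = π z + 1 := by
    intro z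
    show finRotate (m + 5) (π z) = π z + 1
    exact finRotate_succ_apply (π z)
  have hc1 : c i1 = i3 + 1 := by rw [hcap, hπ1]
  have hc2 : c i2 = i4 + 1 := by rw [hcap, hπ2]
  have hc3 : c i3 = i1 + 1 := by rw [hcap, hπ3]
  have hc4 : c i4 = i2 + 1 := by rw [hcap, hπ4]
  have vadd : ∀ a : Fin (m + 5), (a : ℕ) + 1 < m + 5 → ((a + 1 : Fin (m + 5)) : ℕ) = (a : ℕ) + 1 := by
    intro a ha
    apply Fin.val_add_one_of_lt
    rw [Fin.lt_def, Fin.val_last]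
    omega
  -- every orbit of c meets Qᶜ
  have hmeet_c : ∀ x : Fin (m + 5), ∃ y : ↥(({i1, i2, i3, i4} : Set (Fin (m + 5)))ᶜ),
      c.SameCycle x (Subtype.val y) := by
    intro x
    by_contra hcon
    push_neg at hcon
    have hP : ∀ z, c.SameCycle x z → z ∈ ({i1, i2, i3, i4} : Set (Fin (m + 5))) := by
      intro z hz
      by_contra hzQ
      exact hcon ⟨z, hzQ⟩ hz
    have hstep : ∀ z, c.SameCycle x z → c.SameCycle x (c z) :=
      fun z hz => hz.trans ⟨1, by rw [zpow_one]⟩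
    have hQ3 : c.SameCycle x i3 → c.SameCycle x i2 ∧ (i2 : ℕ) = (i1 : ℕ) + 1 := by
      intro h
      have h' := hstep _ h
      rw [hc3] at h'
      have hv : ((i1 + 1 : Fin (m + 5)) : ℕ) = (i1 : ℕ) + 1 := vadd i1 (by omega)
      rcases (memQ _).1 (hP _ h') with h4 | h4 | h4 | h4
      · have := congrArg Fin.val h4; rw [hv] at this; omega
      · exact ⟨h4 ▸ h', by have := congrArg Fin.val h4; rw [hv] at this; omega⟩
      · have := congrArg Fin.val h4; rw [hv] at this; omega
      · have := congrArg Fin.val h4; rw [hv] at this; omega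
    have hQ4 : c.SameCycle x i4 → c.SameCycle x i3 ∧ (i3 : ℕ) = (i2 : ℕ) + 1 := by
      intro h
      have h' := hstep _ h
      rw [hc4] at h'
      have hv : ((i2 + 1 : Fin (m + 5)) : ℕ) = (i2 : ℕ) + 1 := vadd i2 (by omega)
      rcases (memQ _).1 (hP _ h') with h4 | h4 | h4 | h4
      · have := congrArg Fin.val h4; rw [hv] at this; omega
      · have := congrArg Fin.val h4; rw [hv] at this; omega
      · exact ⟨h4 ▸ h', by have := congrArg Fin.val h4; rw [hv] at this; omega⟩
      · have := congrArg Fin.val h4; rw [hv] at this; omega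
    have hQ1 : c.SameCycle x i1 → c.SameCycle x i4 ∧ (i4 : ℕ) = (i3 : ℕ) + 1 := by
      intro h
      have h' := hstep _ h
      rw [hc1] at h'
      have hv : ((i3 + 1 : Fin (m + 5)) : ℕ) = (i3 : ℕ) + 1 := vadd i3 (by omega)
      rcases (memQ _).1 (hP _ h') with h4 | h4 | h4 | h4
      · have := congrArg Fin.val h4; rw [hv] at this; omega
      · have := congrArg Fin.val h4; rw [hv] at this; omega
      · have := congrArg Fin.val h4; rw [hv] at this; omega
      · exact ⟨h4 ▸ h', by have := congrArg Fin.val h4; rw [hv] at this; omega⟩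
    have hQ2 : c.SameCycle x i2 → c.SameCycle x i1 ∧ (i1 : ℕ) = 0 ∧ (i4 : ℕ) = m + 4 := by
      intro h
      have h' := hstep _ h
      rw [hc2] at h'
      by_cases hlast : (i4 : ℕ) = m + 4
      · have h40 : i4 + 1 = 0 := by
          rw [show i4 = Fin.last (m + 4) from Fin.ext (by rw [Fin.val_last]; exact hlast),
            Fin.last_add_one]
        rw [h40] at h'
        rcases (memQ _).1 (hP _ h') with h4 | h4 | h4 | h4
        · refine ⟨h4 ▸ h', ?_, hlast⟩
          have := congrArg Fin.val h4; simp at this; omega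
        · have := congrArg Fin.val h4; simp at this; omega
        · have := congrArg Fin.val h4; simp at this; omega
        · have := congrArg Fin.val h4; simp at this; omega
      · have hv : ((i4 + 1 : Fin (m + 5)) : ℕ) = (i4 : ℕ) + 1 := vadd i4 (by omega)
        rcases (memQ _).1 (hP _ h') with h4 | h4 | h4 | h4 <;>
          · have := congrArg Fin.val h4; rw [hv] at this; omega
    have hPx := hP x (Equiv.Perm.SameCycle.refl c x)
    have hPi2 : c.SameCycle x i2 := by
      rcases (memQ x).1 hPx with h | h | h | h
      · exact (hQ3 (hQ4 (hQ1 (by rw [h])).1).1).1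
      · rw [h]
      · exact (hQ3 (by rw [h])).1
      · exact (hQ3 (hQ4 (by rw [h])).1).1
    obtain ⟨hP1, hv10, hv4l⟩ := hQ2 hPi2
    obtain ⟨hP4, hv43⟩ := hQ1 hP1
    obtain ⟨hP3, hv32⟩ := hQ4 hP4
    obtain ⟨-, hv21⟩ := hQ3 hP3
    omega
  have hconj2 : Nat.card (orbits c) = Nat.card (orbits e) :=
    Stmt16Aux.card_orbits_eq Subtype.val_injective he hmeet_c
  -- basic facts about π and the 4-point set
  have hα_inj : Function.Injective α := hα.injective
  have hπQ : ∀ z, z ∈ ({i1, i2, i3, i4} : Set (Fin (m + 5))) →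
      π z ∈ ({i1, i2, i3, i4} : Set (Fin (m + 5))) := by
    intro z hz
    rcases (memQ z).1 hz with rfl | rfl | rfl | rfl
    · rw [hπ1]; exact (memQ i3).2 (Or.inr (Or.inr (Or.inl rfl)))
    · rw [hπ2]; exact (memQ i4).2 (Or.inr (Or.inr (Or.inr rfl)))
    · rw [hπ3]; exact (memQ i1).2 (Or.inl rfl)
    · rw [hπ4]; exact (memQ i2).2 (Or.inr (Or.inl rfl))
  have hπQc : ∀ z, z ∉ ({i1, i2, i3, i4} : Set (Fin (m + 5))) →
      π z ∉ ({i1, i2, i3, i4} : Set (Fin (m + 5))) := by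
    intro z hz hmem
    exact hz (by rw [← hππ z]; exact hπQ _ hmem)
  have hαQc : ∀ y, α y ∉ ({i1, i2, i3, i4} : Set (Fin (m + 5))) := by
    intro y
    have h1 : α y ∈ Set.range α := Set.mem_range_self y
    rw [hrange] at h1
    exact h1
  have hπα1 : ∀ w, α (πα w) = π (α w) := by
    intro w
    obtain ⟨m', hm1, hint, hret⟩ := hπα w
    have hm'1 : m' = 1 := by
      by_contra hne
      refine hint 1 le_rfl (by omega) ?_
      rw [pow_one, hrange]
      exact hπQc _ (hαQc w)
    rw [hret, hm'1, pow_one]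
  -- transport e to Fin (m+1)
  set β : Fin (m + 5 - 4) ≃ ↥(({i1, i2, i3, i4} : Set (Fin (m + 5)))ᶜ) :=
    (Equiv.ofInjective α hα_inj).trans (Equiv.setCongr hrange) with hβ
  have hβval : ∀ y, ((β y : ↥(({i1, i2, i3, i4} : Set (Fin (m + 5)))ᶜ)) : Fin (m + 5)) = α y := by
    intro y
    simp [hβ, Equiv.setCongr, Equiv.subtypeEquivProp, Equiv.subtypeEquiv]
  set eh : Equiv.Perm (Fin (m + 5 - 4)) := β.symm.permCongr e with hehdef
  have hehy : ∀ y, α (eh y) = ((e (β y) : ↥(({i1, i2, i3, i4} : Set (Fin (m + 5)))ᶜ)) : Fin (m + 5)) := by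
    intro y
    rw [← hβval]
    congr 1
    rw [hehdef]
    simp [Equiv.permCongr_apply]
  have hrangeval :
      Set.range (Subtype.val : ↥(({i1, i2, i3, i4} : Set (Fin (m + 5)))ᶜ) → Fin (m + 5)) =
        Set.range α := by
    rw [Subtype.range_coe, hrange]
  have heh_ind : IsInducedPerm α c eh := by
    intro y
    obtain ⟨m', hm1, hint, hret⟩ := he (β y)
    refine ⟨m', hm1, ?_, ?_⟩
    · intro k hk1 hk2
      have h2 := hint k hk1 hk2
      rw [hβval, hrangeval] at h2
      exact h2
    · rw [hehy y, hret, hβval]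
  have hcard_e_eh : Nat.card (orbits e) = Nat.card (orbits eh) :=
    Stmt16Aux.card_orbits_conj β.symm e
  -- the auxiliary permutation σ = finRotate ∘ (i1 i3)(i2 i4) is an (m+5)-cycle
  have ne12 : i1 ≠ i2 := ne_of_lt h12
  have ne13 : i1 ≠ i3 := ne_of_lt (h12.trans h23)
  have ne14 : i1 ≠ i4 := ne_of_lt ((h12.trans h23).trans h34)
  have ne23 : i2 ≠ i3 := ne_of_lt h23
  have ne24 : i2 ≠ i4 := ne_of_lt (h23.trans h34)
  have ne34 : i3 ≠ i4 := ne_of_lt h34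
  set π₀ : Equiv.Perm (Fin (m + 5)) := Equiv.swap i1 i3 * Equiv.swap i2 i4 with hπ₀
  set σ : Equiv.Perm (Fin (m + 5)) := finRotate (m + 5) * π₀ with hσdef
  have hσap : ∀ z, σ z = π₀ z + 1 := by
    intro z
    show finRotate (m + 5) (π₀ z) = π₀ z + 1
    exact finRotate_succ_apply (π₀ z)
  have hπ₀1 : π₀ i1 = i3 := by
    rw [hπ₀, Equiv.Perm.mul_apply, Equiv.swap_apply_of_ne_of_ne ne12 ne14, Equiv.swap_apply_left]
  have hπ₀2 : π₀ i2 = i4 := by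
    rw [hπ₀, Equiv.Perm.mul_apply, Equiv.swap_apply_left,
      Equiv.swap_apply_of_ne_of_ne ne14.symm ne34.symm]
  have hπ₀3 : π₀ i3 = i1 := by
    rw [hπ₀, Equiv.Perm.mul_apply, Equiv.swap_apply_of_ne_of_ne ne23.symm ne34,
      Equiv.swap_apply_right]
  have hπ₀4 : π₀ i4 = i2 := by
    rw [hπ₀, Equiv.Perm.mul_apply, Equiv.swap_apply_right,
      Equiv.swap_apply_of_ne_of_ne ne12.symm ne23]
  have hπ₀Qc : ∀ z, z ∉ ({i1, i2, i3, i4} : Set (Fin (m + 5))) → π₀ z = z := by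
    intro z hz
    have h1 : z ≠ i1 := fun h => hz ((memQ z).2 (Or.inl h))
    have h2 : z ≠ i2 := fun h => hz ((memQ z).2 (Or.inr (Or.inl h)))
    have h3 : z ≠ i3 := fun h => hz ((memQ z).2 (Or.inr (Or.inr (Or.inl h))))
    have h4 : z ≠ i4 := fun h => hz ((memQ z).2 (Or.inr (Or.inr (Or.inr h))))
    rw [hπ₀, Equiv.Perm.mul_apply, Equiv.swap_apply_of_ne_of_ne h2 h4,
      Equiv.swap_apply_of_ne_of_ne h1 h3]
  have hσQc : ∀ z, z ∉ ({i1, i2, i3, i4} : Set (Fin (m + 5))) → σ z = z + 1 := by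
    intro z hz
    rw [hσap, hπ₀Qc z hz]
  have hσ1 : σ i1 = i3 + 1 := by rw [hσap, hπ₀1]
  have hσ2 : σ i2 = i4 + 1 := by rw [hσap, hπ₀2]
  have hσ3 : σ i3 = i1 + 1 := by rw [hσap, hπ₀3]
  have hσ4 : σ i4 = i2 + 1 := by rw [hσap, hπ₀4]
  have seg : ∀ (d : ℕ) (x y : Fin (m + 5)), (y : ℕ) - (x : ℕ) = d → (x : ℕ) ≤ (y : ℕ) →
      (∀ z : Fin (m + 5), (x : ℕ) ≤ (z : ℕ) → (z : ℕ) < (y : ℕ) →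
        z ∉ ({i1, i2, i3, i4} : Set (Fin (m + 5)))) → σ.SameCycle x y := by
    intro d
    induction d with
    | zero =>
      intro x y hd hle _
      have hxy : x = y := Fin.ext (by omega)
      rw [hxy]
    | succ d ih =>
      intro x y hd hle hQz
      have hxy : (x : ℕ) < (y : ℕ) := by omega
      have hyl := y.isLt
      have hxQ := hQz x le_rfl hxy
      have hx1 : ((x + 1 : Fin (m + 5)) : ℕ) = (x : ℕ) + 1 := vadd x (by omega)
      have h1 : σ.SameCycle x (x + 1) := ⟨1, by rw [zpow_one, hσQc x hxQ]⟩
      exact h1.trans (ih (x + 1) y (by omega) (by omega)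
        (fun z hz1 hz2 => hQz z (by omega) hz2))
  have slast : (i4 : ℕ) < m + 4 → σ.SameCycle (Fin.last (m + 4)) i1 := by
    intro h4
    have hlv : ((Fin.last (m + 4) : Fin (m + 5)) : ℕ) = m + 4 := Fin.val_last _
    have hlastQ := notQ (Fin.last (m + 4)) (by omega) (by omega) (by omega) (by omega)
    have h0 : σ.SameCycle (Fin.last (m + 4)) 0 :=
      ⟨1, by rw [zpow_one, hσQc _ hlastQ, Fin.last_add_one]⟩
    refine h0.trans (seg _ 0 i1 rfl (by simp) ?_)
    intro z hz1 hz2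
    exact notQ z (by omega) (by omega) (by omega) (by omega)
  have s31 : σ.SameCycle i3 i2 := by
    have hv : ((i1 + 1 : Fin (m + 5)) : ℕ) = (i1 : ℕ) + 1 := vadd i1 (by omega)
    have h1 : σ.SameCycle i3 (i1 + 1) := ⟨1, by rw [zpow_one, hσ3]⟩
    refine h1.trans (seg _ (i1 + 1) i2 rfl (by rw [hv]; omega) ?_)
    intro z hz1 hz2
    rw [hv] at hz1
    exact notQ z (by omega) (by omega) (by omega) (by omega)
  have s14 : σ.SameCycle i1 i4 := by
    have hv : ((i3 + 1 : Fin (m + 5)) : ℕ) = (i3 : ℕ) + 1 := vadd i3 (by omega)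
    have h1 : σ.SameCycle i1 (i3 + 1) := ⟨1, by rw [zpow_one, hσ1]⟩
    refine h1.trans (seg _ (i3 + 1) i4 rfl (by rw [hv]; omega) ?_)
    intro z hz1 hz2
    rw [hv] at hz1
    exact notQ z (by omega) (by omega) (by omega) (by omega)
  have s43 : σ.SameCycle i4 i3 := by
    have hv : ((i2 + 1 : Fin (m + 5)) : ℕ) = (i2 : ℕ) + 1 := vadd i2 (by omega)
    have h1 : σ.SameCycle i4 (i2 + 1) := ⟨1, by rw [zpow_one, hσ4]⟩
    refine h1.trans (seg _ (i2 + 1) i3 rfl (by rw [hv]; omega) ?_)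
    intro z hz1 hz2
    rw [hv] at hz1
    exact notQ z (by omega) (by omega) (by omega) (by omega)
  have s21 : σ.SameCycle i2 i1 := by
    by_cases h4 : (i4 : ℕ) = m + 4
    · have h40 : i4 + 1 = 0 := by
        rw [show i4 = Fin.last (m + 4) from Fin.ext (by rw [Fin.val_last]; exact h4),
          Fin.last_add_one]
      have h1 : σ.SameCycle i2 0 := ⟨1, by rw [zpow_one, hσ2, h40]⟩
      refine h1.trans (seg _ 0 i1 rfl (by simp) ?_)
      intro z hz1 hz2
      exact notQ z (by omega) (by omega) (by omega) (by omega)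
    · have hv : ((i4 + 1 : Fin (m + 5)) : ℕ) = (i4 : ℕ) + 1 := vadd i4 (by omega)
      have h1 : σ.SameCycle i2 (i4 + 1) := ⟨1, by rw [zpow_one, hσ2]⟩
      have h2 : σ.SameCycle (i4 + 1) (Fin.last (m + 4)) := by
        refine seg _ (i4 + 1) (Fin.last (m + 4)) rfl (by rw [hv, Fin.val_last]; omega) ?_
        intro z hz1 hz2
        rw [hv] at hz1
        exact notQ z (by omega) (by omega) (by omega) (by omega)
      exact (h1.trans h2).trans (slast (by omega))
  have hi1 : ∀ x : Fin (m + 5), σ.SameCycle x i1 := by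
    intro x
    rcases le_or_gt (x : ℕ) (i1 : ℕ) with h | h
    · refine seg _ x i1 rfl h ?_
      intro z hz1 hz2
      exact notQ z (by omega) (by omega) (by omega) (by omega)
    rcases le_or_gt (x : ℕ) (i2 : ℕ) with h2 | h2
    · refine (seg _ x i2 rfl h2 ?_).trans s21
      intro z hz1 hz2
      exact notQ z (by omega) (by omega) (by omega) (by omega)
    rcases le_or_gt (x : ℕ) (i3 : ℕ) with h3 | h3
    · refine (seg _ x i3 rfl h3 ?_).trans (s31.trans s21)
      intro z hz1 hz2
      exact notQ z (by omega) (by omega) (by omega) (by omega)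
    rcases le_or_gt (x : ℕ) (i4 : ℕ) with h4 | h4
    · refine (seg _ x i4 rfl h4 ?_).trans ((s43.trans s31).trans s21)
      intro z hz1 hz2
      exact notQ z (by omega) (by omega) (by omega) (by omega)
    · have hxl := x.isLt
      have h5 : σ.SameCycle x (Fin.last (m + 4)) := by
        refine seg _ x (Fin.last (m + 4)) rfl (by rw [Fin.val_last]; omega) ?_
        intro z hz1 hz2
        rw [Fin.val_last] at hz2
        exact notQ z (by omega) (by omega) (by omega) (by omega)
      exact h5.trans (slast (by omega))
  have hSC : ∀ x y : Fin (m + 5), σ.SameCycle x y := fun x y => (hi1 x).trans (hi1 y).symm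
  -- the induced permutation of σ is eh * πα⁻¹
  have hcQ : ∀ w, w ∈ ({i1, i2, i3, i4} : Set (Fin (m + 5))) → c w = σ w := by
    intro w hw
    rcases (memQ w).1 hw with rfl | rfl | rfl | rfl
    · rw [hc1, hσ1]
    · rw [hc2, hσ2]
    · rw [hc3, hσ3]
    · rw [hc4, hσ4]
  have hg_ind : IsInducedPerm α σ (eh * πα⁻¹) := by
    intro y
    obtain ⟨m', hm1, hint, hret⟩ := heh_ind (πα⁻¹ y)
    have hu : π (α (πα⁻¹ y)) = α y := by
      rw [← hπα1]
      congr 1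
      exact Equiv.apply_symm_apply πα y
    have step : ∀ k : ℕ, 1 ≤ k → k ≤ m' → (c ^ k) (α (πα⁻¹ y)) = (σ ^ k) (α y) := by
      intro k
      induction k with
      | zero => intro h _; exact absurd h (by omega)
      | succ k ih =>
        intro _ hk
        rcases Nat.eq_zero_or_pos k with rfl | hk0
        · simp only [zero_add, pow_one]
          rw [hcap, hu, hσap, hπ₀Qc _ (hαQc y)]
        · have hik := ih (by omega) (by omega)
          have hmemQ : (σ ^ k) (α y) ∈ ({i1, i2, i3, i4} : Set (Fin (m + 5))) := by
            have h2 := hint k hk0 (by omega)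
            rw [hik, hrange, Set.notMem_compl_iff] at h2
            exact h2
          rw [pow_succ', Equiv.Perm.mul_apply, hik, hcQ _ hmemQ, pow_succ']
          rfl
    refine ⟨m', hm1, ?_, ?_⟩
    · intro k hk1 hk2
      rw [← step k hk1 (by omega)]
      exact hint k hk1 hk2
    · have hmul : (eh * πα⁻¹) y = eh (πα⁻¹ y) := rfl
      rw [hmul, hret]
      exact step m' hm1 le_rfl
  -- σ has a single orbit
  have x0 : Fin (m + 5) := ⟨0, by omega⟩
  have hσcard : Nat.card (orbits σ) = 1 := by
    rw [Nat.card_eq_one_iff_exists]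
    refine ⟨⟨Stmt16Aux.orbit σ x0, Stmt16Aux.orbit_mem_orbits σ x0⟩, ?_⟩
    rintro ⟨A, x, rfl⟩
    exact Subtype.ext (Stmt16Aux.orbit_eq_iff.2 (hSC x x0))
  have y0 : Fin (m + 5 - 4) := ⟨0, by omega⟩
  have hg_meet : ∀ x : Fin (m + 5), ∃ y : Fin (m + 5 - 4), σ.SameCycle x (α y) :=
    fun x => ⟨y0, hSC x (α y0)⟩
  have hgcard : Nat.card (orbits (eh * πα⁻¹)) = 1 := by
    rw [← Stmt16Aux.card_orbits_eq hα_inj hg_ind hg_meet]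
    exact hσcard
  -- conclusion
  refine ⟨?_, hconj2⟩
  rcases Nat.eq_zero_or_pos m with rfl | hm
  · refine ⟨1, ?_⟩
    have huniq : ∀ ρ ρ' : Equiv.Perm (Fin (0 + 5 - 4)), ρ = ρ' := by
      intro ρ ρ'
      apply Equiv.ext
      intro x
      apply Fin.ext
      have h1 := (ρ x).isLt
      have h2 := (ρ' x).isLt
      omega
    rw [huniq (finRotate (0 + 5 - 4) * (1 * πα * 1⁻¹)) eh]
    exact hconj2.trans hcard_e_eh
  · have hall : ∀ x y : Fin (m + 5 - 4), (eh * πα⁻¹).SameCycle x y := by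
      obtain ⟨A₀, hA₀⟩ := Nat.card_eq_one_iff_exists.mp hgcard
      intro x y
      have h1 := hA₀ ⟨Stmt16Aux.orbit (eh * πα⁻¹) x, Stmt16Aux.orbit_mem_orbits _ _⟩
      have h2 := hA₀ ⟨Stmt16Aux.orbit (eh * πα⁻¹) y, Stmt16Aux.orbit_mem_orbits _ _⟩
      exact Stmt16Aux.orbit_eq_iff.1 (congrArg Subtype.val (h1.trans h2.symm))
    have hfix : ∀ x, (eh * πα⁻¹) x ≠ x := by
      intro x hx
      have hne : ∃ y : Fin (m + 5 - 4), y ≠ x := by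
        by_cases h0 : x = ⟨0, by omega⟩
        · refine ⟨⟨1, by omega⟩, fun hc => ?_⟩
          replace hc := hc.trans h0
          exact Nat.one_ne_zero (congrArg Fin.val hc)
        · exact ⟨⟨0, by omega⟩, fun hc => h0 hc.symm⟩
      obtain ⟨y, hy⟩ := hne
      obtain ⟨i, hi⟩ := hall x y
      rw [Equiv.Perm.zpow_apply_eq_self_of_apply_eq_self hx] at hi
      exact hy hi.symm
    have hcyc : (eh * πα⁻¹).IsCycle := ⟨⟨0, by omega⟩, hfix _, fun z hz => hall _ z⟩
    have hsupp : (eh * πα⁻¹).support = Finset.univ :=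
      Finset.eq_univ_iff_forall.2 fun x => Equiv.Perm.mem_support.2 (hfix x)
    have hconjc : IsConj (eh * πα⁻¹) (finRotate (m + 5 - 4)) := by
      refine hcyc.isConj (isCycle_finRotate_of_le (by omega)) ?_
      rw [hsupp, support_finRotate_of_le (by omega)]
    obtain ⟨γ, hγ⟩ := isConj_iff.1 hconjc
    refine ⟨γ, ?_⟩
    have hfr : finRotate (m + 5 - 4) * (γ * πα * γ⁻¹) = γ * eh * γ⁻¹ := by
      rw [← hγ]
      group
    rw [hfr]
    have hpc : (γ : Fin (m + 5 - 4) ≃ Fin (m + 5 - 4)).permCongr eh = γ * eh * γ⁻¹ :=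
      Equiv.ext fun x => rfl
    have hcc : Nat.card (orbits eh) = Nat.card (orbits (γ * eh * γ⁻¹)) := by
      rw [← hpc]
      exact Stmt16Aux.card_orbits_conj γ eh
    exact hconj2.trans (hcard_e_eh.trans hcc)
end

section
/- Let w be a nontrivial element of the commutator subgroup of a free group F, represented by a reduced word W = a₁⋯aₙ in the generators and their inverses. Then there exist indices i₁ < i₂ < i₃ < i₄ such that a_{i₃} = a_{i₁}⁻¹, a_{i₄} = a_{i₂}⁻¹; i.e., W admits a factorization without cancellation W = W₁ a⁻¹ W₂ b⁻¹ W₃ a W₄ b W₅ with a, b generators or inverse generators. -/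
/-- Splitting a list at four increasing indices. -/
lemma split4_aux {β : Type*} (L : List β) (i1 i2 i3 i4 : ℕ) (x1 x2 x3 x4 : β)
    (h12 : i1 < i2) (h23 : i2 < i3) (h34 : i3 < i4)
    (g1 : L[i1]? = some x1) (g2 : L[i2]? = some x2) (g3 : L[i3]? = some x3)
    (g4 : L[i4]? = some x4) :
    ∃ W1 W2 W3 W4 W5 : List β,
      L = W1 ++ [x1] ++ W2 ++ [x2] ++ W3 ++ [x3] ++ W4 ++ [x4] ++ W5 := by
  obtain ⟨h1, rfl⟩ := List.getElem?_eq_some_iff.mp g1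
  obtain ⟨h2, rfl⟩ := List.getElem?_eq_some_iff.mp g2
  obtain ⟨h3, rfl⟩ := List.getElem?_eq_some_iff.mp g3
  obtain ⟨h4, rfl⟩ := List.getElem?_eq_some_iff.mp g4
  refine ⟨L.take i1, (L.drop (i1+1)).take (i2 - (i1+1)), (L.drop (i2+1)).take (i3 - (i2+1)),
    (L.drop (i3+1)).take (i4 - (i3+1)), L.drop (i4+1), ?_⟩
  have step : ∀ m j : ℕ, m ≤ j → (hj : j < L.length) →
      L.drop m = (L.drop m).take (j - m) ++ L[j] :: L.drop (j+1) := by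
    intro m j hmj hj
    conv_lhs => rw [← List.take_append_drop (j - m) (L.drop m)]
    congr 1
    rw [List.drop_drop]
    have : m + (j - m) = j := by omega
    rw [this, List.drop_eq_getElem_cons hj]
  have e1 := step 0 i1 (by omega) h1
  have e2 := step (i1+1) i2 (by omega) h2
  have e3 := step (i2+1) i3 (by omega) h3
  have e4 := step (i3+1) i4 (by omega) h4
  simp only [List.drop_zero] at e1
  simp only [Nat.sub_zero] at e1
  set T2 := (L.drop (i1+1)).take (i2 - (i1+1)) with hT2
  set T3 := (L.drop (i2+1)).take (i3 - (i2+1)) with hT3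
  set T4 := (L.drop (i3+1)).take (i4 - (i3+1)) with hT4
  conv_lhs => rw [e1, e2, e3, e4]
  simp only [List.append_assoc, List.singleton_append, List.cons_append, List.nil_append]

/-- Key combinatorial lemma: a nonempty reduced word in which every letter occurs as
often as its inverse contains a crossing pattern. -/
lemma crossing_aux {α : Type*} [DecidableEq α] (L : List (α × Bool))
    (hred : ∀ (L₁ L₂ : List (α × Bool)) (q : α × Bool), L ≠ L₁ ++ q :: (q.1, !q.2) :: L₂)
    (hcount : ∀ q : α × Bool, L.count q = L.count (q.1, !q.2))
    (hne : L ≠ []) :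
    ∃ (i1 i2 i3 i4 : ℕ) (a b : α × Bool), i1 < i2 ∧ i2 < i3 ∧ i3 < i4 ∧
      L[i1]? = some (a.1, !a.2) ∧ L[i2]? = some (b.1, !b.2) ∧
      L[i3]? = some a ∧ L[i4]? = some b := by
  classical
  have hne' : ∀ q : α × Bool, q ≠ (q.1, !q.2) := by
    rintro ⟨x, b⟩ h
    simp at h
  have hmemInv : ∀ q : α × Bool, q ∈ L → (q.1, !q.2) ∈ L := by
    intro q hq
    have : 0 < L.count (q.1, !q.2) := by
      rw [← hcount]
      exact List.count_pos_iff.2 hq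
    exact List.count_pos_iff.1 this
  set P : ℕ → Prop := fun d => ∃ (i : ℕ) (q : α × Bool),
    L[i]? = some q ∧ L[i + d + 1]? = some (q.1, !q.2) with hPdef
  have hP : ∃ d, P d := by
    obtain ⟨q, t, rfl⟩ := List.exists_cons_of_ne_nil hne
    obtain ⟨k, hk, hkk⟩ := List.mem_iff_getElem.mp (hmemInv q List.mem_cons_self)
    have hk0 : k ≠ 0 := by
      intro h0
      subst h0
      simp only [List.getElem_cons_zero] at hkk
      exact hne' q hkk
    refine ⟨k - 1, 0, q, by simp, ?_⟩
    have : 0 + (k - 1) + 1 = k := by omega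
    rw [this, List.getElem?_eq_getElem hk, hkk]
  set d := Nat.find hP with hd
  obtain ⟨i, q, hiq, hkq⟩ : P d := Nat.find_spec hP
  -- basic facts about positions
  obtain ⟨hilt, hieq⟩ := List.getElem?_eq_some_iff.mp hiq
  obtain ⟨hklt, hkeq'⟩ := List.getElem?_eq_some_iff.mp hkq
  clear hkeq'
  by_cases hd0 : d = 0
  · -- adjacent cancellation, contradicting reducedness
    exfalso
    have hkq1 : L[i + 1]? = some (q.1, !q.2) := by
      rw [← hkq]; congr 1; omega
    obtain ⟨hi1, hkeq⟩ := List.getElem?_eq_some_iff.mp hkq1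
    apply hred (L.take i) (L.drop (i + 2)) q
    conv_lhs => rw [← List.take_append_drop i L]
    congr 1
    rw [List.drop_eq_getElem_cons hilt, hieq]
    congr 1
    have h2 := List.drop_eq_getElem_cons (l := L) hi1
    rw [show i + 1 + 1 = i + 2 by omega] at h2
    rw [h2, hkeq]
  · -- d ≥ 1 : consider the letter right after position i
    have hm : i + 1 < L.length := by omega
    set c := L[i+1] with hc
    obtain ⟨l, hllt, hlc⟩ := List.mem_iff_getElem.mp (hmemInv c (List.getElem_mem hm))
    have hmq : L[i+1]? = some c := List.getElem?_eq_getElem hm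
    have hlq : L[l]? = some (c.1, !c.2) := by rw [List.getElem?_eq_getElem hllt, hlc]
    rcases lt_trichotomy l i with hli | hli | hli
    · -- crossing: l < i < i+1 < i+d+1
      refine ⟨l, i, i + 1, i + d + 1, c, (q.1, !q.2), hli, by omega, by omega, hlq, ?_, ?_, hkq⟩
      · simpa [Bool.not_not] using hiq
      · exact hmq
    · -- l = i : gap 0, contradicts minimality of d
      exfalso
      apply Nat.find_min hP (show 0 < d by omega)
      refine ⟨i, q, hiq, ?_⟩
      have hlq' : L[l]? = some q := by rw [hli]; exact hiq
      have hq : q = (c.1, !c.2) := Option.some.inj (hlq'.symm.trans hlq)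
      have hcq : c = (q.1, !q.2) := by rw [hq]; simp [Bool.not_not]
      rw [show i + 0 + 1 = i + 1 by omega, hmq, hcq]
    · rcases lt_trichotomy l (i + 1) with h1 | h1 | h1
      · omega
      · -- l = i+1 : a letter equal to its own inverse, impossible
        exfalso
        subst h1
        exact hne' c (hc.trans hlc)
      · rcases lt_or_ge (i + d + 1) l with h2 | h2
        · -- crossing: i < i+1 < i+d+1 < l
          refine ⟨i, i + 1, i + d + 1, l, (q.1, !q.2), (c.1, !c.2), by omega, by omega, h2,
            ?_, ?_, hkq, hlq⟩
          · simpa [Bool.not_not] using hiq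
          · simpa [Bool.not_not] using hmq
        · -- i+1 < l ≤ i+d+1 : smaller gap, contradicts minimality of d
          exfalso
          apply Nat.find_min hP (show l - i - 2 < d by omega)
          refine ⟨i + 1, c, hmq, ?_⟩
          rw [show i + 1 + (l - i - 2) + 1 = l by omega]
          exact hlq

/-- Exponent sums vanish on the commutator subgroup. -/
lemma count_eq_aux {α : Type*} [DecidableEq α] (w : FreeGroup α)
    (hw : w ∈ commutator (FreeGroup α)) (x : α) :
    w.toWord.count (x, true) = w.toWord.count (x, false) := by
  classical
  set f : FreeGroup α →* Multiplicative ℤ :=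
    FreeGroup.lift (fun y => if y = x then Multiplicative.ofAdd (1 : ℤ) else 1) with hf
  have h1 : f w = 1 := Abelianization.commutator_subset_ker f hw
  have key : ∀ L : List (α × Bool),
      Multiplicative.toAdd (List.prod (L.map fun q =>
        cond q.2 (if q.1 = x then Multiplicative.ofAdd (1 : ℤ) else 1)
          (if q.1 = x then Multiplicative.ofAdd (1 : ℤ) else 1)⁻¹))
      = (L.count (x, true) : ℤ) - (L.count (x, false) : ℤ) := by
    intro L
    induction L with
    | nil => simp
    | cons q t ih =>
      obtain ⟨y, b⟩ := q
      rcases eq_or_ne y x with rfl | hyx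
      · cases b <;>
          simp [List.count_cons, ih, toAdd_mul, Prod.ext_iff] <;> push_cast <;> ring
      · cases b <;>
          simp [List.count_cons, ih, hyx, toAdd_mul, Prod.ext_iff] <;> push_cast <;> ring
  have h2 : f w = f (FreeGroup.mk w.toWord) := by rw [FreeGroup.mk_toWord]
  rw [hf, FreeGroup.lift_mk] at h2
  have h3 := congrArg Multiplicative.toAdd (h2.symm.trans h1)
  rw [key] at h3
  simp only [toAdd_one] at h3
  omega

theorem stmt_17 {α : Type*} [Fintype α] [DecidableEq α] (w : FreeGroup α)
    (hw : w ∈ commutator (FreeGroup α)) (hne : w ≠ 1) :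
    ∃ (W1 W2 W3 W4 W5 : List (α × Bool)) (a b : α × Bool),
      w.toWord = W1 ++ [(a.1, !a.2)] ++ W2 ++ [(b.1, !b.2)] ++ W3 ++ [a] ++ W4 ++ [b] ++ W5 := by
  classical
  set L := w.toWord with hL
  have hred : ∀ (L₁ L₂ : List (α × Bool)) (q : α × Bool), L ≠ L₁ ++ q :: (q.1, !q.2) :: L₂ := by
    intro L₁ L₂ q h
    exact FreeGroup.reduce.not ((FreeGroup.reduce_toWord w).trans h)
  have hcount : ∀ q : α × Bool, L.count q = L.count (q.1, !q.2) := by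
    rintro ⟨x, b⟩
    rcases b
    · exact (count_eq_aux w hw x).symm
    · exact count_eq_aux w hw x
  have hnil : L ≠ [] := fun h => hne (FreeGroup.toWord_eq_nil_iff.mp h)
  obtain ⟨i1, i2, i3, i4, a, b, h12, h23, h34, g1, g2, g3, g4⟩ :=
    crossing_aux L hred hcount hnil
  obtain ⟨W1, W2, W3, W4, W5, hW⟩ :=
    split4_aux L i1 i2 i3 i4 (a.1, !a.2) (b.1, !b.2) a b h12 h23 h34 g1 g2 g3 g4
  exact ⟨W1, W2, W3, W4, W5, a, b, hW⟩
end

section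
/- Let F be a free group and w ∈ [F,F] with cl(w) = l ≥ 1. If w = w₁a⁻¹w₂b⁻¹w₃aw₄bw₅ (any factorization in F, with a, b ∈ F), then cl(w₁w₄w₃w₂w₅) ≥ l − 1. -/
lemma commF_inv {G : Type*} [Group G] (a b : G) : (commF a b)⁻¹ = commF b a := by
  simp [commF, mul_assoc]

lemma inv_prod_aux {G : Type*} [Group G] (L : List (G × G)) :
    ((L.map fun p => commF p.1 p.2).prod)⁻¹ =
    ((L.reverse.map Prod.swap).map fun p => commF p.1 p.2).prod := by
  induction L with
  | nil => simp
  | cons p L ih => simp [ih, commF_inv p.1 p.2]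

lemma isProd_iff_list {G : Type*} [Group G] (g : G) :
    (∃ n, IsProdOfCommutators g n) ↔
    ∃ L : List (G × G), g = (L.map fun p => commF p.1 p.2).prod := by
  constructor
  · rintro ⟨n, a, b, rfl⟩
    refine ⟨List.ofFn (fun i => (a i, b i)), ?_⟩
    rw [List.map_ofFn]
    rfl
  · rintro ⟨L, rfl⟩
    refine ⟨L.length, fun i => (L.get i).1, fun i => (L.get i).2, ?_⟩
    congr 1
    rw [show (fun i => commF (L.get i).1 (L.get i).2) =
      (fun p : G × G => commF p.1 p.2) ∘ L.get from rfl, ← List.map_ofFn, List.ofFn_get]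

lemma mem_comm_exists_list {G : Type*} [Group G] (g : G) (hg : g ∈ commutator G) :
    ∃ L : List (G × G), g = (L.map fun p => commF p.1 p.2).prod := by
  rw [commutator_eq_closure] at hg
  induction hg using Subgroup.closure_induction with
  | mem x hx =>
    obtain ⟨p, q, rfl⟩ := hx
    exact ⟨[(p⁻¹, q⁻¹)], by simp [commF, commutatorElement_def]⟩
  | one => exact ⟨[], by simp⟩
  | mul x y _ _ hx hy =>
    obtain ⟨L1, rfl⟩ := hx
    obtain ⟨L2, rfl⟩ := hy
    exact ⟨L1 ++ L2, by simp⟩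
  | inv x _ hx =>
    obtain ⟨L, rfl⟩ := hx
    exact ⟨L.reverse.map Prod.swap, inv_prod_aux L⟩

theorem stmt_18 {α : Type*} (w w1 w2 w3 w4 w5 a b : FreeGroup α)
    (hw : w ∈ commutator (FreeGroup α)) (l : ℕ) (hl : cl w = l) (hl1 : 1 ≤ l)
    (hfac : w = w1 * a⁻¹ * w2 * b⁻¹ * w3 * a * w4 * b * w5) :
    l - 1 ≤ cl (w1 * w4 * w3 * w2 * w5) := by
  set x := w1 * w4 * w3 * a * w1⁻¹ with hx
  set y := w1 * w4 * b * w2⁻¹ * w3⁻¹ * w4⁻¹ * w1⁻¹ with hy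
  set v := w1 * w4 * w3 * w2 * w5 with hv
  have hid : w = commF x y * v := by
    rw [hfac, hx, hy, hv, commF]; group
  have hvmem : v ∈ commutator (FreeGroup α) := by
    have hc : commF x y ∈ commutator (FreeGroup α) := by
      have := Subgroup.commutator_mem_commutator (Subgroup.mem_top x⁻¹) (Subgroup.mem_top y⁻¹)
      simpa [commF, commutatorElement_def, mul_assoc, commutator_def] using this
    have hveq : v = (commF x y)⁻¹ * w := by rw [hid]; group
    rw [hveq]
    exact mul_mem (inv_mem hc) hw
  have hne : {n | IsProdOfCommutators v n}.Nonempty := by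
    obtain ⟨n, hn⟩ := (isProd_iff_list v).mpr (mem_comm_exists_list v hvmem)
    exact ⟨n, hn⟩
  -- v is a product of cl v commutators
  obtain ⟨p, q, hpq⟩ : IsProdOfCommutators v (cl v) := Nat.sInf_mem hne
  -- so w is a product of cl v + 1 commutators
  have hw1 : IsProdOfCommutators w (cl v + 1) := by
    refine ⟨Fin.cons x p, Fin.cons y q, ?_⟩
    rw [List.ofFn_succ]
    simp only [Fin.cons_zero, Fin.cons_succ, List.prod_cons]
    rw [hid]; exact congrArg (commF x y * ·) hpq
  have hle : cl w ≤ cl v + 1 := Nat.sInf_le hw1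
  omega
end
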